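/- arXiv:1603.05380 — 3 statements merged into one kernel-verified Lean document; each statement's English description precedes it below -/
import Mathlib

section
/- Let X : [0,T) → ℝ^N be a solution of the gradient flow of F^N_m and set f(t) = (1/(m+1))|X(t)|^{m+1} (note X(t) ≠ 0 since X(t) ∈ R^N and N ≥ 2). Then f is twice differentiable on [0,T) with f′(t) = (m−1) F^N_m(X(t)) |X(t)|^{m−1} and f″(t) = −((m−1)/(m+1)) f(t)^{−1} H^N_{m+1}(X(t)/|X(t)|); in particular f″(t) ≤ 0, so f is concave on [0,T). -/
open scoped BigOperators
noncomputable section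

/-- Internal (diffusion) part: sum of (X_{i+1} - X_i)^(1-m) over consecutive gaps. -/
def gapSum (m : ℝ) (p : ℕ) (X : EuclideanSpace ℝ (Fin p)) : ℝ :=
  ∑ i : Fin p, if h : (i : ℕ) + 1 < p then (X ⟨(i : ℕ) + 1, h⟩ - X i) ^ (1 - m) else 0

/-- Interaction part: sum of |X_i - X_j|^(1-m) over ordered pairs i ≠ j. -/
def pairSum (m : ℝ) (p : ℕ) (X : EuclideanSpace ℝ (Fin p)) : ℝ :=
  ∑ i : Fin p, ∑ j : Fin p, if i ≠ j then |X i - X j| ^ (1 - m) else 0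

/-- The discrete free energy F^p_m. -/
def FF (m χ : ℝ) (p : ℕ) (X : EuclideanSpace ℝ (Fin p)) : ℝ :=
  (m - 1)⁻¹ * gapSum m p X - (χ / (m - 1)) * pairSum m p X

/-- Membership in R^p: strictly increasing with zero mean. -/
def memR (p : ℕ) (X : EuclideanSpace ℝ (Fin p)) : Prop :=
  (StrictMono fun i => X i) ∧ ∑ i, X i = 0

/-- The critical constant C_p, with 1/C_p the sup of the HLS ratio. -/
def Cp (m : ℝ) (p : ℕ) : ℝ :=
  (sSup {r : ℝ | ∃ X : EuclideanSpace ℝ (Fin p), memR p X ∧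
    r = pairSum m p X / gapSum m p X})⁻¹

/-- The functional F^p_{m,α} with confining quadratic potential. -/
def FFa (m χ α : ℝ) (p : ℕ) (X : EuclideanSpace ℝ (Fin p)) : ℝ :=
  FF m χ p X + α / 2 * ‖X‖ ^ 2

/-- H^N_{m+1}(Y) = |∇F^N_m(Y)|² − ((m−1) F^N_m(Y))². -/
def Hfun (m χ : ℝ) (N : ℕ) (Y : EuclideanSpace ℝ (Fin N)) : ℝ :=
  ‖gradient (FF m χ N) Y‖ ^ 2 - ((m - 1) * FF m χ N Y) ^ 2

/-- X : [0,T) → R^N is a solution of the gradient flow of F^N_m. -/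
def isGFlow (m χ : ℝ) (N : ℕ) (T : ℝ) (X : ℝ → EuclideanSpace ℝ (Fin N)) : Prop :=
  ∀ t ∈ Set.Ico (0 : ℝ) T, memR N (X t) ∧
    HasDerivWithinAt X (-(gradient (FF m χ N) (X t))) (Set.Ico (0 : ℝ) T) t

/-- The gap Y_{i+1} - Y_i (0 if i+1 is out of range). -/
def gapAt (N : ℕ) (Y : EuclideanSpace ℝ (Fin N)) (i : ℕ) : ℝ :=
  if h : i + 1 < N then Y ⟨i + 1, h⟩ - Y ⟨i, Nat.lt_of_succ_lt h⟩ else 0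

section Aux

open scoped RealInnerProductSpace Topology

variable {N : ℕ} {m χ : ℝ}

lemma sq_rpow_half (b : ℝ) (hb : 0 ≤ b) (p : ℝ) : (b ^ 2) ^ (p / 2) = b ^ p := by
  rw [← Real.rpow_natCast b 2, ← Real.rpow_mul hb]
  congr 1
  push_cast
  ring

lemma abs_rpow_eq_sq (x p : ℝ) : |x| ^ p = ((x ^ 2) : ℝ) ^ (p / 2) := by
  rw [← sq_abs, sq_rpow_half _ (abs_nonneg x)]

lemma coord_diffAt (j : Fin N) (Y : EuclideanSpace ℝ (Fin N)) :
    DifferentiableAt ℝ (fun X : EuclideanSpace ℝ (Fin N) => X j) Y :=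
  ContinuousLinearMap.differentiableAt (𝕜 := ℝ) (EuclideanSpace.proj (𝕜 := ℝ) j) (x := Y)

lemma isOpen_O : IsOpen {Z : EuclideanSpace ℝ (Fin N) | StrictMono fun i => Z i} := by
  have h : {Z : EuclideanSpace ℝ (Fin N) | StrictMono fun i => Z i}
      = ⋂ (p : {q : Fin N × Fin N // q.1 < q.2}), {Z | Z p.1.1 < Z p.1.2} := by
    ext Z
    simp only [Set.mem_iInter, Set.mem_setOf_eq]
    exact ⟨fun h p => h p.2, fun h a b hab => h ⟨(a, b), hab⟩⟩
  rw [h]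
  exact isOpen_iInter_of_finite fun p =>
    isOpen_lt (EuclideanSpace.proj (𝕜 := ℝ) p.1.1).continuous
      (EuclideanSpace.proj (𝕜 := ℝ) p.1.2).continuous

lemma FF_differentiableAt (hm : 1 < m) {Y : EuclideanSpace ℝ (Fin N)}
    (hY : StrictMono fun i => Y i) : DifferentiableAt ℝ (FF m χ N) Y := by
  have hgap : DifferentiableAt ℝ (gapSum m N) Y := by
    unfold gapSum
    apply DifferentiableAt.fun_sum
    intro i _
    by_cases h : (i : ℕ) + 1 < N
    · simp only [dif_pos h]
      have h1 : DifferentiableAt ℝ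
          (fun X : EuclideanSpace ℝ (Fin N) => X ⟨(i : ℕ) + 1, h⟩ - X i) Y :=
        (coord_diffAt _ Y).sub (coord_diffAt _ Y)
      have hne : Y ⟨(i : ℕ) + 1, h⟩ - Y i ≠ 0 := by
        have : Y i < Y ⟨(i : ℕ) + 1, h⟩ := hY (by simp [Fin.lt_def])
        exact sub_ne_zero.2 (ne_of_gt this)
      exact h1.rpow_const (Or.inl hne)
    · simp only [dif_neg h]
      exact differentiableAt_const 0
  have hpair : DifferentiableAt ℝ (pairSum m N) Y := by
    unfold pairSum
    apply DifferentiableAt.fun_sum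
    intro i _
    apply DifferentiableAt.fun_sum
    intro j _
    by_cases h : i ≠ j
    · simp only [if_pos h]
      have heq : (fun X : EuclideanSpace ℝ (Fin N) => |X i - X j| ^ (1 - m))
          = fun X => (((X i - X j) ^ 2 : ℝ)) ^ ((1 - m) / 2) := by
        funext X; exact abs_rpow_eq_sq _ _
      rw [heq]
      have h1 : DifferentiableAt ℝ
          (fun X : EuclideanSpace ℝ (Fin N) => ((X i - X j) ^ 2 : ℝ)) Y :=
        ((coord_diffAt i Y).sub (coord_diffAt j Y)).pow 2
      have hne : ((Y i - Y j) ^ 2 : ℝ) ≠ 0 := by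
        have : Y i ≠ Y j := fun hc => h (hY.injective hc)
        exact pow_ne_zero 2 (sub_ne_zero.2 this)
      exact h1.rpow_const (Or.inl hne)
    · simp only [if_neg h]
      exact differentiableAt_const 0
  exact (hgap.const_mul _).sub (hpair.const_mul _)

lemma smul_strictMono {c : ℝ} (hc : 0 < c) {Y : EuclideanSpace ℝ (Fin N)}
    (hY : StrictMono fun i => Y i) : StrictMono fun i => (c • Y) i := by
  intro a b hab
  simp only [PiLp.smul_apply, smul_eq_mul]
  exact mul_lt_mul_of_pos_left (hY hab) hc

lemma gapSum_smul {c : ℝ} (hc : 0 < c) {Y : EuclideanSpace ℝ (Fin N)}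
    (hY : StrictMono fun i => Y i) :
    gapSum m N (c • Y) = c ^ (1 - m) * gapSum m N Y := by
  unfold gapSum
  rw [Finset.mul_sum]
  apply Finset.sum_congr rfl
  intro i _
  by_cases h : (i : ℕ) + 1 < N
  · simp only [dif_pos h, PiLp.smul_apply, smul_eq_mul]
    rw [← mul_sub, Real.mul_rpow hc.le]
    have : Y i < Y ⟨(i : ℕ) + 1, h⟩ := hY (by simp [Fin.lt_def])
    linarith [this]
  · simp [dif_neg h]

lemma pairSum_smul {c : ℝ} (hc : 0 < c) (Y : EuclideanSpace ℝ (Fin N)) :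
    pairSum m N (c • Y) = c ^ (1 - m) * pairSum m N Y := by
  unfold pairSum
  rw [Finset.mul_sum]
  apply Finset.sum_congr rfl
  intro i _
  rw [Finset.mul_sum]
  apply Finset.sum_congr rfl
  intro j _
  by_cases h : i ≠ j
  · simp only [if_pos h, PiLp.smul_apply, smul_eq_mul]
    rw [← mul_sub, abs_mul, abs_of_pos hc, Real.mul_rpow hc.le (abs_nonneg _)]
  · simp [if_neg h]

lemma FF_smul {c : ℝ} (hc : 0 < c) {Y : EuclideanSpace ℝ (Fin N)}
    (hY : StrictMono fun i => Y i) :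
    FF m χ N (c • Y) = c ^ (1 - m) * FF m χ N Y := by
  unfold FF
  rw [gapSum_smul hc hY, pairSum_smul hc Y]
  ring

lemma inner_gradient (f : EuclideanSpace ℝ (Fin N) → ℝ) (x v : EuclideanSpace ℝ (Fin N)) :
    ⟪gradient f x, v⟫ = fderiv ℝ f x v := by
  rw [gradient, ← InnerProductSpace.toDual_apply_apply, LinearIsometryEquiv.apply_symm_apply]

lemma euler (hm : 1 < m) {Y : EuclideanSpace ℝ (Fin N)}
    (hY : StrictMono fun i => Y i) :
    ⟪gradient (FF m χ N) Y, Y⟫ = (1 - m) * FF m χ N Y := by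
  have hd := FF_differentiableAt (χ := χ) hm hY
  have h1 : HasDerivAt (fun c : ℝ => FF m χ N (c • Y)) (fderiv ℝ (FF m χ N) Y Y) 1 := by
    have hs : HasDerivAt (fun c : ℝ => c • Y) Y 1 := by
      simpa using (hasDerivAt_id (1 : ℝ)).smul_const Y
    have hd' : HasFDerivAt (FF m χ N) (fderiv ℝ (FF m χ N) Y) ((1 : ℝ) • Y) := by
      rw [one_smul]; exact hd.hasFDerivAt
    have := hd'.comp_hasDerivAt 1 hs
    exact this
  have h2 : HasDerivAt (fun c : ℝ => c ^ (1 - m) * FF m χ N Y)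
      ((1 - m) * FF m χ N Y) 1 := by
    have := (Real.hasDerivAt_rpow_const (x := 1) (p := 1 - m) (Or.inl one_ne_zero)).mul_const
      (FF m χ N Y)
    simpa using this
  have heq : (fun c : ℝ => FF m χ N (c • Y)) =ᶠ[𝓝 1]
      fun c : ℝ => c ^ (1 - m) * FF m χ N Y := by
    filter_upwards [Ioi_mem_nhds one_pos] with c hc
    exact FF_smul hc hY
  have h3 : HasDerivAt (fun c : ℝ => FF m χ N (c • Y)) ((1 - m) * FF m χ N Y) 1 :=
    h2.congr_of_eventuallyEq heq
  rw [inner_gradient]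
  exact h1.unique h3

lemma fderiv_FF_smul (hm : 1 < m) {c : ℝ} (hc : 0 < c) {Y : EuclideanSpace ℝ (Fin N)}
    (hY : StrictMono fun i => Y i) (v : EuclideanSpace ℝ (Fin N)) :
    fderiv ℝ (FF m χ N) (c • Y) v = c ^ (-m) * fderiv ℝ (FF m χ N) Y v := by
  have hd := FF_differentiableAt (χ := χ) hm hY
  have hdc := FF_differentiableAt (χ := χ) hm (smul_strictMono hc hY)
  have hsm : HasFDerivAt (fun Z : EuclideanSpace ℝ (Fin N) => c • Z)
      (c • ContinuousLinearMap.id ℝ (EuclideanSpace ℝ (Fin N))) Y :=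
    (c • ContinuousLinearMap.id ℝ (EuclideanSpace ℝ (Fin N))).hasFDerivAt
  have h1 : HasFDerivAt (fun Z : EuclideanSpace ℝ (Fin N) => FF m χ N (c • Z))
      ((fderiv ℝ (FF m χ N) (c • Y)).comp
        (c • ContinuousLinearMap.id ℝ (EuclideanSpace ℝ (Fin N)))) Y :=
    hdc.hasFDerivAt.comp Y hsm
  have h2 : HasFDerivAt (fun Z : EuclideanSpace ℝ (Fin N) => c ^ (1 - m) * FF m χ N Z)
      (c ^ (1 - m) • fderiv ℝ (FF m χ N) Y) Y := hd.hasFDerivAt.const_mul _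
  have heq : (fun Z : EuclideanSpace ℝ (Fin N) => FF m χ N (c • Z)) =ᶠ[𝓝 Y]
      fun Z => c ^ (1 - m) * FF m χ N Z := by
    filter_upwards [isOpen_O.mem_nhds hY] with Z hZ
    exact FF_smul hc hZ
  have h3 := h2.congr_of_eventuallyEq heq
  have h4 := h1.unique h3
  have h5 := congrArg (fun (L : EuclideanSpace ℝ (Fin N) →L[ℝ] ℝ) => L v) h4
  simp only [ContinuousLinearMap.comp_apply, ContinuousLinearMap.smul_apply,
    ContinuousLinearMap.id_apply, map_smul, smul_eq_mul] at h5
  have hcm : c ^ (1 - m) = c * c ^ (-m) := by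
    rw [show (1 - m) = 1 + (-m) by ring, Real.rpow_add hc, Real.rpow_one]
  rw [hcm] at h5
  have hc0 : c ≠ 0 := ne_of_gt hc
  exact mul_left_cancel₀ hc0 (h5.trans (by ring))

lemma gradient_FF_smul (hm : 1 < m) {c : ℝ} (hc : 0 < c) {Y : EuclideanSpace ℝ (Fin N)}
    (hY : StrictMono fun i => Y i) :
    gradient (FF m χ N) (c • Y) = c ^ (-m) • gradient (FF m χ N) Y := by
  apply ext_inner_right ℝ
  intro v
  rw [inner_gradient, fderiv_FF_smul hm hc hY v, real_inner_smul_left, inner_gradient]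

lemma arith_key (hm : 1 < m) {b : ℝ} (hb : 0 < b) (Fv Gv : ℝ) :
    (m - 1) * (-Gv * b ^ (m - 1) +
      Fv * (2 * ((m - 1) * Fv) * ((m - 1) / 2) * b ^ (m - 3)))
    = -((m - 1) / (m + 1)) * ((m + 1)⁻¹ * b ^ (m + 1))⁻¹ *
      ((b ^ m) ^ 2 * Gv - ((m - 1) * (b ^ (m - 1) * Fv)) ^ 2) := by
  have h1 : b ^ (m - 1) = b ^ m / b := by
    rw [Real.rpow_sub hb, Real.rpow_one]
  have h3 : b ^ (m - 3) = b ^ m / (b * b * b) := by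
    rw [Real.rpow_sub hb]
    congr 1
    rw [show (3 : ℝ) = ((3 : ℕ) : ℝ) by norm_num, Real.rpow_natCast]
    ring
  have h2 : b ^ (m + 1) = b ^ m * b := by
    rw [Real.rpow_add hb, Real.rpow_one]
  have hbm : b ^ m ≠ 0 := ne_of_gt (Real.rpow_pos_of_pos hb m)
  have hm1 : m + 1 ≠ 0 := by linarith
  have hb0 : b ≠ 0 := ne_of_gt hb
  rw [h1, h2, h3]
  field_simp
  ring

lemma norm_rpow_inner (x : EuclideanSpace ℝ (Fin N)) (p : ℝ) :
    ((⟪x, x⟫ : ℝ)) ^ (p / 2) = ‖x‖ ^ p := by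
  rw [real_inner_self_eq_norm_sq, sq_rpow_half _ (norm_nonneg x)]

end Aux

section Main

open scoped RealInnerProductSpace Topology

theorem stmt13 (N : ℕ) (hN : 2 ≤ N) (m χ : ℝ) (hm : 1 < m) (hχ : 0 < χ)
    (T : ℝ) (hT : 0 < T) (X : ℝ → EuclideanSpace ℝ (Fin N))
    (hflow : isGFlow m χ N T X) :
    (∀ t ∈ Set.Ico (0 : ℝ) T,
      HasDerivWithinAt (fun s => (m + 1)⁻¹ * ‖X s‖ ^ (m + 1))
        ((m - 1) * FF m χ N (X t) * ‖X t‖ ^ (m - 1)) (Set.Ico (0 : ℝ) T) t) ∧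
    (∀ t ∈ Set.Ico (0 : ℝ) T,
      HasDerivWithinAt (fun s => (m - 1) * FF m χ N (X s) * ‖X s‖ ^ (m - 1))
        (-((m - 1) / (m + 1)) * ((m + 1)⁻¹ * ‖X t‖ ^ (m + 1))⁻¹ *
          Hfun m χ N (‖X t‖⁻¹ • X t)) (Set.Ico (0 : ℝ) T) t) ∧
    (∀ t ∈ Set.Ico (0 : ℝ) T,
      -((m - 1) / (m + 1)) * ((m + 1)⁻¹ * ‖X t‖ ^ (m + 1))⁻¹ *
        Hfun m χ N (‖X t‖⁻¹ • X t) ≤ 0) ∧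
    ConcaveOn ℝ (Set.Ico (0 : ℝ) T) (fun s => (m + 1)⁻¹ * ‖X s‖ ^ (m + 1)) := by
  -- basic facts at each time
  have hbasic : ∀ t ∈ Set.Ico (0 : ℝ) T, (StrictMono fun i => X t i) ∧ 0 < ‖X t‖ := by
    intro t ht
    have hmem := (hflow t ht).1
    refine ⟨hmem.1, ?_⟩
    rw [norm_pos_iff]
    intro h0
    have h01 : (⟨0, by omega⟩ : Fin N) < ⟨1, by omega⟩ := by simp [Fin.lt_def]
    have := hmem.1 h01
    rw [h0] at this
    simp at this
  -- derivative of the inner product along the flow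
  have hinner_deriv : ∀ t ∈ Set.Ico (0 : ℝ) T,
      HasDerivWithinAt (fun s => (⟪X s, X s⟫ : ℝ))
        (2 * ((m - 1) * FF m χ N (X t))) (Set.Ico (0 : ℝ) T) t := by
    intro t ht
    have hX' := (hflow t ht).2
    have hSM := (hbasic t ht).1
    have h := hX'.inner ℝ hX'
    have he := euler (χ := χ) hm hSM
    have hval : (⟪X t, -(gradient (FF m χ N) (X t))⟫ : ℝ)
        + ⟪-(gradient (FF m χ N) (X t)), X t⟫ = 2 * ((m - 1) * FF m χ N (X t)) := by
      have he' : (⟪X t, gradient (FF m χ N) (X t)⟫ : ℝ) = (1 - m) * FF m χ N (X t) := by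
        rw [real_inner_comm]; exact he
      rw [inner_neg_right, inner_neg_left,
        real_inner_comm (gradient (FF m χ N) (X t)) (X t), he]
      ring
    rwa [hval] at h
  -- first derivative
  have part1 : ∀ t ∈ Set.Ico (0 : ℝ) T,
      HasDerivWithinAt (fun s => (m + 1)⁻¹ * ‖X s‖ ^ (m + 1))
        ((m - 1) * FF m χ N (X t) * ‖X t‖ ^ (m - 1)) (Set.Ico (0 : ℝ) T) t := by
    intro t ht
    have hb := (hbasic t ht).2
    have hip : (0 : ℝ) < ⟪X t, X t⟫ := by
      rw [real_inner_self_eq_norm_sq]; positivity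
    have h1 := ((hinner_deriv t ht).rpow_const (p := (m + 1) / 2)
      (Or.inl (ne_of_gt hip))).const_mul ((m + 1)⁻¹)
    have hfun : (fun s => (m + 1)⁻¹ * ‖X s‖ ^ (m + 1))
        = fun s => (m + 1)⁻¹ * ((⟪X s, X s⟫ : ℝ)) ^ ((m + 1) / 2) := by
      funext s; rw [norm_rpow_inner]
    rw [hfun]
    convert h1 using 1
    case e'_4 => rfl
    case e'_5 => rfl
    have he1 : ((⟪X t, X t⟫ : ℝ)) ^ ((m + 1) / 2 - 1) = ‖X t‖ ^ (m - 1) := by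
      rw [show (m + 1) / 2 - 1 = (m - 1) / 2 by ring, norm_rpow_inner]
    rw [he1]
    have hm1 : m + 1 ≠ 0 := by linarith
    field_simp
  -- derivative of FF along the flow
  have hFF_deriv : ∀ t ∈ Set.Ico (0 : ℝ) T,
      HasDerivWithinAt (fun s => FF m χ N (X s))
        (-(‖gradient (FF m χ N) (X t)‖ ^ 2)) (Set.Ico (0 : ℝ) T) t := by
    intro t ht
    have hX' := (hflow t ht).2
    have hSM := (hbasic t ht).1
    have hd := FF_differentiableAt (χ := χ) hm hSM
    have h := hd.hasFDerivAt.comp_hasDerivWithinAt t hX'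
    have hval : fderiv ℝ (FF m χ N) (X t) (-(gradient (FF m χ N) (X t)))
        = -(‖gradient (FF m χ N) (X t)‖ ^ 2) := by
      rw [← inner_gradient, inner_neg_right, real_inner_self_eq_norm_sq]
    rwa [hval] at h
  -- Hfun at the normalized point
  have hHval : ∀ t ∈ Set.Ico (0 : ℝ) T,
      Hfun m χ N (‖X t‖⁻¹ • X t)
        = (‖X t‖ ^ m) ^ 2 * (‖gradient (FF m χ N) (X t)‖ ^ 2)
          - ((m - 1) * (‖X t‖ ^ (m - 1) * FF m χ N (X t))) ^ 2 := by
    intro t ht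
    have hb := (hbasic t ht).2
    have hSM := (hbasic t ht).1
    have hbinv : (0 : ℝ) < ‖X t‖⁻¹ := inv_pos.2 hb
    have hg := gradient_FF_smul (χ := χ) hm hbinv hSM
    have hf := FF_smul (χ := χ) (m := m) hbinv hSM
    have hc1 : (‖X t‖⁻¹ : ℝ) ^ (-m) = ‖X t‖ ^ m := by
      rw [Real.inv_rpow hb.le, Real.rpow_neg hb.le, inv_inv]
    have hc2 : (‖X t‖⁻¹ : ℝ) ^ (1 - m) = ‖X t‖ ^ (m - 1) := by
      rw [Real.inv_rpow hb.le, ← Real.rpow_neg hb.le, show -(1 - m) = m - 1 by ring]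
    unfold Hfun
    rw [hg, hf, hc1, hc2, norm_smul]
    rw [Real.norm_eq_abs, abs_of_pos (Real.rpow_pos_of_pos hb m)]
    ring
  -- second derivative
  have part2 : ∀ t ∈ Set.Ico (0 : ℝ) T,
      HasDerivWithinAt (fun s => (m - 1) * FF m χ N (X s) * ‖X s‖ ^ (m - 1))
        (-((m - 1) / (m + 1)) * ((m + 1)⁻¹ * ‖X t‖ ^ (m + 1))⁻¹ *
          Hfun m χ N (‖X t‖⁻¹ • X t)) (Set.Ico (0 : ℝ) T) t := by
    intro t ht
    have hb := (hbasic t ht).2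
    have hip : (0 : ℝ) < ⟪X t, X t⟫ := by
      rw [real_inner_self_eq_norm_sq]; positivity
    have hρ := (hinner_deriv t ht).rpow_const (p := (m - 1) / 2) (Or.inl (ne_of_gt hip))
    have h := ((hFF_deriv t ht).mul hρ).const_mul (m - 1)
    have hfun : (fun s => (m - 1) * FF m χ N (X s) * ‖X s‖ ^ (m - 1))
        = fun s => (m - 1) * (FF m χ N (X s) * ((⟪X s, X s⟫ : ℝ)) ^ ((m - 1) / 2)) := by
      funext s; rw [norm_rpow_inner]; ring
    rw [hfun]
    convert h using 1
    case e'_4 => rfl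
    case e'_5 => rfl
    case e'_8 => rfl
    rw [hHval t ht]
    have he1 : ((⟪X t, X t⟫ : ℝ)) ^ ((m - 1) / 2) = ‖X t‖ ^ (m - 1) := norm_rpow_inner _ _
    have he2 : ((⟪X t, X t⟫ : ℝ)) ^ ((m - 1) / 2 - 1) = ‖X t‖ ^ (m - 3) := by
      rw [show (m - 1) / 2 - 1 = (m - 3) / 2 by ring, norm_rpow_inner]
    rw [he1, he2]
    exact (arith_key hm hb (FF m χ N (X t)) (‖gradient (FF m χ N) (X t)‖ ^ 2)).symm
  -- nonpositivity
  have part3 : ∀ t ∈ Set.Ico (0 : ℝ) T,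
      -((m - 1) / (m + 1)) * ((m + 1)⁻¹ * ‖X t‖ ^ (m + 1))⁻¹ *
        Hfun m χ N (‖X t‖⁻¹ • X t) ≤ 0 := by
    intro t ht
    have hb := (hbasic t ht).2
    have hSM := (hbasic t ht).1
    have hbinv : (0 : ℝ) < ‖X t‖⁻¹ := inv_pos.2 hb
    have hYsm := smul_strictMono hbinv hSM
    have hYnorm : ‖(‖X t‖⁻¹ • X t : EuclideanSpace ℝ (Fin N))‖ = 1 := by
      rw [norm_smul, Real.norm_eq_abs, abs_of_pos hbinv, inv_mul_cancel₀ (ne_of_gt hb)]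
    have he := euler (χ := χ) hm hYsm
    have hH : 0 ≤ Hfun m χ N (‖X t‖⁻¹ • X t) := by
      have hcs := abs_real_inner_le_norm (gradient (FF m χ N) (‖X t‖⁻¹ • X t))
        (‖X t‖⁻¹ • X t)
      rw [hYnorm, mul_one] at hcs
      unfold Hfun
      have h2 : ((m - 1) * FF m χ N (‖X t‖⁻¹ • X t)) ^ 2
          = (⟪gradient (FF m χ N) (‖X t‖⁻¹ • X t), ‖X t‖⁻¹ • X t⟫ : ℝ) ^ 2 := by
        rw [he]; ring
      rw [h2]
      nlinarith [hcs, abs_nonneg (⟪gradient (FF m χ N) (‖X t‖⁻¹ • X t), ‖X t‖⁻¹ • X t⟫ : ℝ),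
        sq_abs (⟪gradient (FF m χ N) (‖X t‖⁻¹ • X t), ‖X t‖⁻¹ • X t⟫ : ℝ)]
    have hpos2 : (0 : ℝ) < ((m + 1)⁻¹ * ‖X t‖ ^ (m + 1))⁻¹ := by
      have h1 : (0 : ℝ) < ‖X t‖ ^ (m + 1) := Real.rpow_pos_of_pos hb _
      have h2 : (0 : ℝ) < (m + 1)⁻¹ := by positivity
      positivity
    have hpos1 : (0 : ℝ) < (m - 1) / (m + 1) := by
      apply div_pos <;> linarith
    have hkey : 0 ≤ (m - 1) / (m + 1) * ((m + 1)⁻¹ * ‖X t‖ ^ (m + 1))⁻¹ *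
        Hfun m χ N (‖X t‖⁻¹ • X t) :=
      mul_nonneg (mul_nonneg hpos1.le hpos2.le) hH
    have heq : -((m - 1) / (m + 1)) * ((m + 1)⁻¹ * ‖X t‖ ^ (m + 1))⁻¹ *
        Hfun m χ N (‖X t‖⁻¹ • X t)
        = -((m - 1) / (m + 1) * ((m + 1)⁻¹ * ‖X t‖ ^ (m + 1))⁻¹ *
          Hfun m χ N (‖X t‖⁻¹ • X t)) := by ring
    rw [heq]
    exact neg_nonpos.2 hkey
  refine ⟨part1, part2, part3, ?_⟩
  -- concavity
  have hIco : ∀ x ∈ Set.Ioo (0 : ℝ) T, Set.Ico (0 : ℝ) T ∈ 𝓝 x := fun x hx =>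
    Filter.mem_of_superset (isOpen_Ioo.mem_nhds hx) Set.Ioo_subset_Ico_self
  have hf1At : ∀ x ∈ Set.Ioo (0 : ℝ) T,
      HasDerivAt (fun s => (m + 1)⁻¹ * ‖X s‖ ^ (m + 1))
        ((m - 1) * FF m χ N (X x) * ‖X x‖ ^ (m - 1)) x := fun x hx =>
    (part1 x (Set.Ioo_subset_Ico_self hx)).hasDerivAt (hIco x hx)
  have hgAt : ∀ x ∈ Set.Ioo (0 : ℝ) T,
      HasDerivAt (fun s => (m - 1) * FF m χ N (X s) * ‖X s‖ ^ (m - 1))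
        (-((m - 1) / (m + 1)) * ((m + 1)⁻¹ * ‖X x‖ ^ (m + 1))⁻¹ *
          Hfun m χ N (‖X x‖⁻¹ • X x)) x := fun x hx =>
    (part2 x (Set.Ioo_subset_Ico_self hx)).hasDerivAt (hIco x hx)
  have hganti : AntitoneOn (fun x => (m - 1) * FF m χ N (X x) * ‖X x‖ ^ (m - 1))
      (Set.Ioo (0 : ℝ) T) := by
    apply antitoneOn_of_deriv_nonpos (convex_Ioo 0 T)
    · intro x hx
      exact ((hgAt x hx).continuousAt).continuousWithinAt
    · intro x hx
      rw [interior_Ioo] at hx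
      exact ((hgAt x hx).differentiableAt).differentiableWithinAt
    · intro x hx
      rw [interior_Ioo] at hx
      rw [(hgAt x hx).deriv]
      exact part3 x (Set.Ioo_subset_Ico_self hx)
  apply AntitoneOn.concaveOn_of_deriv (convex_Ico 0 T)
  · intro x hx
    exact (part1 x hx).continuousWithinAt
  · intro x hx
    rw [interior_Ico] at hx
    exact ((hf1At x hx).differentiableAt).differentiableWithinAt
  · intro a ha b hb hab
    rw [interior_Ico] at ha hb
    rw [(hf1At a ha).deriv, (hf1At b hb).deriv]
    exact hganti ha hb hab

end Main
end
end

section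
/- Assume χ < C_N. Then solutions of the gradient flow of F^N_m do not blow up in finite time: for every solution X : [0,T) → ℝ^N of the gradient flow with T < ∞, there exists ε > 0 such that X_{i+1}(t) − X_i(t) ≥ ε for all t ∈ [0,T) and all 1 ≤ i ≤ N−1 (so the maximal solution issued from any X_0 ∈ R^N is defined on all of [0,∞)). -/
open scoped BigOperators
noncomputable section

namespace Stmt17Aux

variable {N : ℕ} {m χ : ℝ}

lemma gap_pos {Y : EuclideanSpace ℝ (Fin N)} (hY : StrictMono fun i => Y i)
    (i : Fin N) (h : (i : ℕ) + 1 < N) : 0 < Y ⟨(i : ℕ) + 1, h⟩ - Y i := by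
  have : i < (⟨(i : ℕ) + 1, h⟩ : Fin N) := by
    simp [Fin.lt_def]
  have := hY this
  linarith [this]

lemma gapSum_term_nonneg (hm : 1 < m) {Y : EuclideanSpace ℝ (Fin N)}
    (hY : StrictMono fun i => Y i) (i : Fin N) :
    0 ≤ if h : (i : ℕ) + 1 < N then (Y ⟨(i : ℕ) + 1, h⟩ - Y i) ^ (1 - m) else 0 := by
  by_cases h : (i : ℕ) + 1 < N
  · rw [dif_pos h]
    exact le_of_lt (Real.rpow_pos_of_pos (gap_pos hY i h) _)
  · rw [dif_neg h]

lemma gapSum_nonneg (hm : 1 < m) {Y : EuclideanSpace ℝ (Fin N)}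
    (hY : StrictMono fun i => Y i) : 0 ≤ gapSum m N Y :=
  Finset.sum_nonneg fun i _ => gapSum_term_nonneg hm hY i

lemma term_le_gapSum (hm : 1 < m) {Y : EuclideanSpace ℝ (Fin N)}
    (hY : StrictMono fun i => Y i) (i : Fin N) (h : (i : ℕ) + 1 < N) :
    (Y ⟨(i : ℕ) + 1, h⟩ - Y i) ^ (1 - m) ≤ gapSum m N Y := by
  have := Finset.single_le_sum (f := fun i : Fin N =>
      if h : (i : ℕ) + 1 < N then (Y ⟨(i : ℕ) + 1, h⟩ - Y i) ^ (1 - m) else 0)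
    (fun j _ => gapSum_term_nonneg hm hY j) (Finset.mem_univ i)
  simp only [dif_pos h] at this
  exact this

lemma gapSum_pos (hN : 2 ≤ N) (hm : 1 < m) {Y : EuclideanSpace ℝ (Fin N)}
    (hY : StrictMono fun i => Y i) : 0 < gapSum m N Y := by
  have h0 : (0 : ℕ) + 1 < N := by omega
  have h1 : 0 < (Y ⟨0 + 1, h0⟩ - Y ⟨0, by omega⟩) ^ (1 - m) :=
    Real.rpow_pos_of_pos (gap_pos hY ⟨0, by omega⟩ h0) _
  calc 0 < (Y ⟨(((⟨0, by omega⟩ : Fin N)) : ℕ) + 1, h0⟩ - Y ⟨0, by omega⟩) ^ (1 - m) := h1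
    _ ≤ gapSum m N Y := term_le_gapSum hm hY ⟨0, by omega⟩ h0

lemma pair_term_le (hm : 1 < m) {Y : EuclideanSpace ℝ (Fin N)}
    (hY : StrictMono fun i => Y i) {i j : Fin N} (hij : i < j) :
    |Y i - Y j| ^ (1 - m) ≤ gapSum m N Y := by
  have hij' : (i : ℕ) + 1 < N := lt_of_le_of_lt (Nat.succ_le_of_lt hij) j.isLt
  have hle : Y ⟨(i : ℕ) + 1, hij'⟩ ≤ Y j := by
    rcases eq_or_lt_of_le (show ((⟨(i : ℕ) + 1, hij'⟩ : Fin N)) ≤ j from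
      by simpa [Fin.le_def] using Nat.succ_le_of_lt hij) with h | h
    · rw [h]
    · exact le_of_lt (hY h)
  have hgap : 0 < Y ⟨(i : ℕ) + 1, hij'⟩ - Y i := gap_pos hY i hij'
  have hYij : Y i < Y j := hY hij
  have habs : |Y i - Y j| = Y j - Y i := by
    rw [abs_sub_comm]; exact abs_of_pos (by linarith)
  rw [habs]
  calc (Y j - Y i) ^ (1 - m) ≤ (Y ⟨(i : ℕ) + 1, hij'⟩ - Y i) ^ (1 - m) := by
        apply (Real.rpow_le_rpow_iff_of_neg (by linarith) hgap (by linarith)).2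
        linarith
    _ ≤ gapSum m N Y := term_le_gapSum hm hY i hij'

lemma pairSum_le (hm : 1 < m) {Y : EuclideanSpace ℝ (Fin N)}
    (hY : StrictMono fun i => Y i) :
    pairSum m N Y ≤ (N : ℝ) ^ 2 * gapSum m N Y := by
  have hgs := gapSum_nonneg hm hY
  have hterm : ∀ i j : Fin N,
      (if i ≠ j then |Y i - Y j| ^ (1 - m) else 0) ≤ gapSum m N Y := by
    intro i j
    by_cases h : i = j
    · simp [h, hgs]
    · rw [if_pos h]
      rcases lt_or_gt_of_ne h with hlt | hgt
      · exact pair_term_le hm hY hlt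
      · rw [abs_sub_comm]; exact pair_term_le hm hY hgt
  calc pairSum m N Y ≤ ∑ _i : Fin N, ∑ _j : Fin N, gapSum m N Y := by
        apply Finset.sum_le_sum
        intro i _
        exact Finset.sum_le_sum fun j _ => hterm i j
    _ = (N : ℝ) ^ 2 * gapSum m N Y := by
        simp [Finset.sum_const, Finset.card_univ]; ring

lemma pairSum_pos (hN : 2 ≤ N) (hm : 1 < m) {Y : EuclideanSpace ℝ (Fin N)}
    (hY : StrictMono fun i => Y i) : 0 < pairSum m N Y := by
  have hnn : ∀ i j : Fin N, 0 ≤ (if i ≠ j then |Y i - Y j| ^ (1 - m) else 0) := by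
    intro i j
    by_cases h : i ≠ j
    · rw [if_pos h]
      have : Y i ≠ Y j := fun he => h (hY.injective he)
      exact le_of_lt (Real.rpow_pos_of_pos (abs_pos.2 (sub_ne_zero.2 this)) _)
    · rw [if_neg h]
  have h0 : (0 : ℕ) < N := by omega
  have h1 : (1 : ℕ) < N := by omega
  set i0 : Fin N := ⟨0, h0⟩
  set i1 : Fin N := ⟨1, h1⟩
  have hne : i0 ≠ i1 := by simp [i0, i1, Fin.ext_iff]
  have hpos : 0 < (if i0 ≠ i1 then |Y i0 - Y i1| ^ (1 - m) else 0) := by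
    rw [if_pos hne]
    have : Y i0 ≠ Y i1 := fun he => hne (hY.injective he)
    exact Real.rpow_pos_of_pos (abs_pos.2 (sub_ne_zero.2 this)) _
  have hrow_nonneg : ∀ i : Fin N, 0 ≤ ∑ j : Fin N,
      (if i ≠ j then |Y i - Y j| ^ (1 - m) else 0) :=
    fun i => Finset.sum_nonneg fun j _ => hnn i j
  have hrow_pos : 0 < ∑ j : Fin N, (if i0 ≠ j then |Y i0 - Y j| ^ (1 - m) else 0) :=
    lt_of_lt_of_le hpos (Finset.single_le_sum (fun j _ => hnn i0 j) (Finset.mem_univ i1))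
  exact lt_of_lt_of_le hrow_pos
    (Finset.single_le_sum (fun i _ => hrow_nonneg i) (Finset.mem_univ i0))

/-- An explicit element of R^N. -/
def Xex (N : ℕ) : EuclideanSpace ℝ (Fin N) := WithLp.toLp 2 (fun i : Fin N => (i : ℝ) - ((N : ℝ) - 1) / 2)

lemma Xex_memR (hN : 2 ≤ N) : memR N (Xex N) := by
  constructor
  · intro i j hij
    have : (i : ℝ) < (j : ℝ) := by exact_mod_cast hij
    simp only [Xex, WithLp.ofLp_toLp]
    linarith
  · have hsum : ∑ i : Fin N, ((i : ℕ) : ℝ) = (N : ℝ) * ((N : ℝ) - 1) / 2 := by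
      rw [Fin.sum_univ_eq_sum_range (fun i => ((i : ℕ) : ℝ))]
      have := Finset.sum_range_id_mul_two N
      have hcast : ((∑ i ∈ Finset.range N, i : ℕ) : ℝ) * 2 = (N : ℝ) * ((N : ℝ) - 1) := by
        rw [← Nat.cast_ofNat, ← Nat.cast_mul, this]
        have : (N : ℝ) - 1 = ((N - 1 : ℕ) : ℝ) := by
          rw [Nat.cast_sub (by omega)]; simp
        rw [this, ← Nat.cast_mul]
      push_cast at hcast ⊢
      linarith
    simp only [Xex, WithLp.ofLp_toLp, Finset.sum_sub_distrib, hsum, Finset.sum_const, Finset.card_univ,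
      Fintype.card_fin, nsmul_eq_mul]
    ring

lemma diff_coord (i : Fin N) (Y : EuclideanSpace ℝ (Fin N)) :
    DifferentiableAt ℝ (fun Y : EuclideanSpace ℝ (Fin N) => Y i) Y :=
  (EuclideanSpace.proj i : EuclideanSpace ℝ (Fin N) →L[ℝ] ℝ).differentiableAt

lemma diffFF (hm : 1 < m) {Y : EuclideanSpace ℝ (Fin N)}
    (hY : StrictMono fun i => Y i) : DifferentiableAt ℝ (FF m χ N) Y := by
  have hgap : DifferentiableAt ℝ (gapSum m N) Y := by
    unfold gapSum
    apply DifferentiableAt.fun_sum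
    intro i _
    by_cases h : (i : ℕ) + 1 < N
    · simp only [dif_pos h]
      have hsub : DifferentiableAt ℝ
          (fun Y : EuclideanSpace ℝ (Fin N) => Y ⟨(i : ℕ) + 1, h⟩ - Y i) Y :=
        (diff_coord _ Y).sub (diff_coord _ Y)
      exact hsub.rpow_const (Or.inl (ne_of_gt (gap_pos hY i h)))
    · simp only [dif_neg h]
      exact differentiableAt_const 0
  have hpair : DifferentiableAt ℝ (pairSum m N) Y := by
    unfold pairSum
    apply DifferentiableAt.fun_sum
    intro i _
    apply DifferentiableAt.fun_sum
    intro j _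
    by_cases h : i = j
    · simp only [h, ne_eq, not_true_eq_false, if_false]
      exact differentiableAt_const 0
    · simp only [if_pos h]
      have hsub : DifferentiableAt ℝ
          (fun Y : EuclideanSpace ℝ (Fin N) => Y i - Y j) Y :=
        (diff_coord _ Y).sub (diff_coord _ Y)
      have hne : Y i - Y j ≠ 0 :=
        sub_ne_zero.2 (fun he => h (hY.injective he))
      have habs : DifferentiableAt ℝ
          (fun Y : EuclideanSpace ℝ (Fin N) => |Y i - Y j|) Y :=
        by have := (differentiableAt_abs hne).comp Y hsub; exact this
      exact habs.rpow_const (Or.inl (by simpa [abs_ne_zero] using hne))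
  exact ((hgap.const_mul _).sub (hpair.const_mul _))

end Stmt17Aux

open Stmt17Aux in
theorem stmt17 (N : ℕ) (hN : 2 ≤ N) (m χ : ℝ) (hm : 1 < m) (hχ : 0 < χ)
    (hsub : χ < Cp m N) (T : ℝ) (hT : 0 < T) (X : ℝ → EuclideanSpace ℝ (Fin N))
    (hflow : isGFlow m χ N T X) :
    ∃ ε : ℝ, 0 < ε ∧ ∀ t ∈ Set.Ico (0 : ℝ) T, ∀ i : ℕ, i + 1 < N →
      ε ≤ gapAt N (X t) i := by
  classical
  set s : Set ℝ := Set.Ico (0 : ℝ) T with hs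
  set S : Set ℝ := {r : ℝ | ∃ Y : EuclideanSpace ℝ (Fin N), memR N Y ∧
    r = pairSum m N Y / gapSum m N Y} with hSdef
  set σ : ℝ := sSup S with hσdef
  -- basic facts about S and σ
  have hSne : S.Nonempty := ⟨_, Xex N, Xex_memR hN, rfl⟩
  have hSbdd : BddAbove S := by
    refine ⟨(N : ℝ) ^ 2, fun r hr => ?_⟩
    obtain ⟨Y, hY, rfl⟩ := hr
    have hg := gapSum_pos hN hm hY.1
    rw [div_le_iff₀ hg]
    exact pairSum_le hm hY.1
  have hσpos : 0 < σ := by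
    have hmem : pairSum m N (Xex N) / gapSum m N (Xex N) ∈ S := ⟨Xex N, Xex_memR hN, rfl⟩
    have := le_csSup hSbdd hmem
    have hpos : 0 < pairSum m N (Xex N) / gapSum m N (Xex N) :=
      div_pos (pairSum_pos hN hm (Xex_memR hN).1) (gapSum_pos hN hm (Xex_memR hN).1)
    linarith
  have hratio : ∀ Y : EuclideanSpace ℝ (Fin N), memR N Y →
      pairSum m N Y ≤ σ * gapSum m N Y := by
    intro Y hY
    have hg := gapSum_pos hN hm hY.1
    have hmem : pairSum m N Y / gapSum m N Y ∈ S := ⟨Y, hY, rfl⟩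
    have := le_csSup hSbdd hmem
    calc pairSum m N Y = (pairSum m N Y / gapSum m N Y) * gapSum m N Y := by
          field_simp
      _ ≤ σ * gapSum m N Y := mul_le_mul_of_nonneg_right this (le_of_lt hg)
  have hχσ : χ * σ < 1 := by
    have : χ < σ⁻¹ := by rwa [Cp] at hsub
    have h := mul_lt_mul_of_pos_right this hσpos
    rwa [inv_mul_cancel₀ (ne_of_gt hσpos)] at h
  have hm1 : (0 : ℝ) < m - 1 := by linarith
  set c : ℝ := (m - 1)⁻¹ * (1 - χ * σ) with hcdef
  have hcpos : 0 < c := mul_pos (inv_pos.2 hm1) (by linarith)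
  -- lower bound for FF
  have hlow : ∀ Y : EuclideanSpace ℝ (Fin N), memR N Y →
      c * gapSum m N Y ≤ FF m χ N Y := by
    intro Y hY
    have hg := gapSum_pos hN hm hY.1
    have hp := hratio Y hY
    have hmul : χ * pairSum m N Y ≤ χ * σ * gapSum m N Y := by
      calc χ * pairSum m N Y ≤ χ * (σ * gapSum m N Y) :=
            mul_le_mul_of_nonneg_left hp (le_of_lt hχ)
        _ = χ * σ * gapSum m N Y := by ring
    have hkey : (1 - χ * σ) * gapSum m N Y ≤ gapSum m N Y - χ * pairSum m N Y := by
      nlinarith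
    have := mul_le_mul_of_nonneg_left hkey (le_of_lt (inv_pos.2 hm1))
    calc c * gapSum m N Y = (m - 1)⁻¹ * ((1 - χ * σ) * gapSum m N Y) := by
          rw [hcdef]; ring
      _ ≤ (m - 1)⁻¹ * (gapSum m N Y - χ * pairSum m N Y) := this
      _ = FF m χ N Y := by rw [FF]; field_simp
  -- energy decay
  set φ : ℝ → ℝ := fun t => FF m χ N (X t) with hφdef
  have hφderiv : ∀ t ∈ s, HasDerivWithinAt φ
      (-(‖gradient (FF m χ N) (X t)‖ ^ 2)) s t := by
    intro t ht
    obtain ⟨hmem, hderiv⟩ := hflow t ht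
    have hdiff := diffFF (χ := χ) hm hmem.1
    have hgrad := hdiff.hasGradientAt
    have hFD := hgrad.hasFDerivAt
    have hcomp := hFD.comp_hasDerivWithinAt t hderiv
    have heq : (InnerProductSpace.toDual ℝ (EuclideanSpace ℝ (Fin N))
        (gradient (FF m χ N) (X t))) (-(gradient (FF m χ N) (X t)))
        = -(‖gradient (FF m χ N) (X t)‖ ^ 2) := by
      rw [InnerProductSpace.toDual_apply_apply, inner_neg_right, real_inner_self_eq_norm_sq]
    rw [heq] at hcomp
    exact hcomp
  have hφcont : ContinuousOn φ s := by
    intro t ht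
    obtain ⟨hmem, hderiv⟩ := hflow t ht
    exact ((diffFF (χ := χ) hm hmem.1).continuousAt).comp_continuousWithinAt
      hderiv.continuousWithinAt
  have hintD : interior s = Set.Ioo 0 T := interior_Ico
  have hφanti : AntitoneOn φ s := by
    apply antitoneOn_of_deriv_nonpos (convex_Ico 0 T) hφcont
    · intro x hx
      rw [hintD] at hx
      have hxs : x ∈ s := Set.Ioo_subset_Ico_self hx
      have hnhds : s ∈ nhds x := Ico_mem_nhds hx.1 hx.2
      exact ((hφderiv x hxs).hasDerivAt hnhds).differentiableAt.differentiableWithinAt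
    · intro x hx
      rw [hintD] at hx
      have hxs : x ∈ s := Set.Ioo_subset_Ico_self hx
      have hnhds : s ∈ nhds x := Ico_mem_nhds hx.1 hx.2
      rw [((hφderiv x hxs).hasDerivAt hnhds).deriv]
      simp [sq_nonneg]
  have h0s : (0 : ℝ) ∈ s := ⟨le_refl 0, hT⟩
  have hdec : ∀ t ∈ s, φ t ≤ φ 0 := fun t ht => hφanti h0s ht ht.1
  -- bound on gapSum
  set M : ℝ := φ 0 with hMdef
  have hMpos : 0 < M := by
    have h1 := hlow (X 0) (hflow 0 h0s).1
    have h2 := gapSum_pos hN hm (hflow 0 h0s).1.1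
    have : 0 < c * gapSum m N (X 0) := mul_pos hcpos h2
    calc (0 : ℝ) < c * gapSum m N (X 0) := this
      _ ≤ φ 0 := h1
  set K : ℝ := M / c with hKdef
  have hKpos : 0 < K := div_pos hMpos hcpos
  have hgapK : ∀ t ∈ s, gapSum m N (X t) ≤ K := by
    intro t ht
    have h1 := hlow (X t) (hflow t ht).1
    have h2 := hdec t ht
    rw [hKdef, le_div_iff₀ hcpos]
    calc gapSum m N (X t) * c = c * gapSum m N (X t) := by ring
      _ ≤ φ t := h1
      _ ≤ M := h2
  -- extract ε
  have h1m : (1 : ℝ) - m ≠ 0 := by linarith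
  refine ⟨K ^ (1 - m)⁻¹, Real.rpow_pos_of_pos hKpos _, ?_⟩
  intro t ht i hi
  set ε : ℝ := K ^ (1 - m)⁻¹ with hεdef
  have hεK : ε ^ (1 - m) = K := Real.rpow_inv_rpow (le_of_lt hKpos) h1m
  have hεpos : 0 < ε := Real.rpow_pos_of_pos hKpos _
  have hmono := (hflow t ht).1.1
  rw [gapAt, dif_pos hi]
  set g : ℝ := X t ⟨i + 1, hi⟩ - X t ⟨i, Nat.lt_of_succ_lt hi⟩ with hgdef
  have hgpos : 0 < g := gap_pos hmono ⟨i, Nat.lt_of_succ_lt hi⟩ hi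
  by_contra hcon
  push_neg at hcon
  have hlt : ε ^ (1 - m) < g ^ (1 - m) :=
    Real.rpow_lt_rpow_of_neg hgpos hcon (by linarith)
  have hterm : g ^ (1 - m) ≤ gapSum m N (X t) :=
    term_le_gapSum hm hmono ⟨i, Nat.lt_of_succ_lt hi⟩ hi
  have := hgapK t ht
  rw [hεK] at hlt
  linarith
end
end

section
/- Assume χ = C_N. Then solutions of the gradient flow of F^N_m do not blow up in finite time: for every solution X : [0,T) → ℝ^N of the gradient flow with T < ∞, there exists ε > 0 such that X_{i+1}(t) − X_i(t) ≥ ε for all t ∈ [0,T) and all 1 ≤ i ≤ N−1 (so the maximal solution issued from any X_0 ∈ R^N is defined on all of [0,∞)). -/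
open scoped BigOperators
noncomputable section

namespace S18

open Filter Finset Real

/-! ### Window sums over ℕ-indexed sequences -/

def Gw (m : ℝ) (Z : ℕ → ℝ) (a L : ℕ) : ℝ :=
  ∑ k ∈ Finset.range (L - 1), (Z (a + k + 1) - Z (a + k)) ^ (1 - m)

def Pw (m : ℝ) (Z : ℕ → ℝ) (a L : ℕ) : ℝ :=
  ∑ i ∈ Finset.range L, ∑ j ∈ Finset.range L,
    if i ≠ j then |Z (a + i) - Z (a + j)| ^ (1 - m) else 0

def IncOn (Z : ℕ → ℝ) (a L : ℕ) : Prop :=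
  ∀ ⦃i j : ℕ⦄, i < j → j < L → Z (a + i) < Z (a + j)

def extC (p : ℕ) (X : EuclideanSpace ℝ (Fin p)) : ℕ → ℝ :=
  fun n => if h : n < p then X ⟨n, h⟩ else 0

def sig (m : ℝ) (p : ℕ) : ℝ :=
  sSup {r : ℝ | ∃ X : EuclideanSpace ℝ (Fin p), memR p X ∧
    r = pairSum m p X / gapSum m p X}

lemma extC_apply (p : ℕ) (X : EuclideanSpace ℝ (Fin p)) (j : Fin p) :
    extC p X (j : ℕ) = X j := by
  simp [extC, j.isLt]

variable {m : ℝ}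

lemma sum_range_pred (L : ℕ) (f : ℕ → ℝ) :
    (∑ k ∈ Finset.range L, if k + 1 < L then f k else 0) = ∑ k ∈ Finset.range (L - 1), f k := by
  cases L with
  | zero => simp
  | succ n =>
    rw [Finset.sum_range_succ]
    simp only [Nat.add_lt_add_iff_right, Nat.succ_sub_one, lt_self_iff_false, if_false, add_zero]
    apply Finset.sum_congr rfl
    intro k hk
    rw [if_pos (by simpa using Nat.succ_lt_succ (Finset.mem_range.mp hk))]

lemma gapSum_eq_Gw (p : ℕ) (X : EuclideanSpace ℝ (Fin p)) :
    gapSum m p X = Gw m (extC p X) 0 p := by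
  rw [gapSum, Gw]
  simp only [zero_add]
  rw [show (∑ i : Fin p, if h : (i : ℕ) + 1 < p then (X ⟨(i : ℕ) + 1, h⟩ - X i) ^ (1 - m) else 0)
      = ∑ k ∈ Finset.range p, if h : k + 1 < p then (extC p X (k+1) - extC p X k) ^ (1 - m) else 0 from ?_]
  · rw [← sum_range_pred p (fun k => (extC p X (k+1) - extC p X k) ^ (1-m))]
    apply Finset.sum_congr rfl
    intro k _
    by_cases h : k + 1 < p
    · simp only [dif_pos h, if_pos h, zero_add]
    · simp [h]
  · rw [← Fin.sum_univ_eq_sum_range (fun k => if h : k + 1 < p then (extC p X (k+1) - extC p X k) ^ (1 - m) else 0) p]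
    apply Finset.sum_congr rfl
    intro i _
    by_cases h : (i : ℕ) + 1 < p
    · simp only [dif_pos h]
      simp [extC, h, i.isLt]
    · simp [h]

lemma pairSum_eq_Pw (p : ℕ) (X : EuclideanSpace ℝ (Fin p)) :
    pairSum m p X = Pw m (extC p X) 0 p := by
  rw [pairSum, Pw]
  simp only [zero_add]
  rw [← Fin.sum_univ_eq_sum_range (fun i => ∑ j ∈ Finset.range p,
      if i ≠ j then |extC p X i - extC p X j| ^ (1 - m) else 0) p]
  apply Finset.sum_congr rfl
  intro i _
  rw [← Fin.sum_univ_eq_sum_range (fun j => if (i:ℕ) ≠ j then |extC p X i - extC p X j| ^ (1 - m) else 0) p]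
  apply Finset.sum_congr rfl
  intro j _
  rw [extC_apply, extC_apply]
  by_cases hij : i = j
  · simp [hij]
  · rw [if_pos hij, if_pos (by simpa [Fin.ext_iff] using hij)]

lemma memR_incOn {p : ℕ} {X : EuclideanSpace ℝ (Fin p)} (h : memR p X) :
    IncOn (extC p X) 0 p := by
  intro i j hij hj
  have hi : i < p := hij.trans hj
  simp only [zero_add]
  rw [show i = ((⟨i, hi⟩ : Fin p) : ℕ) from rfl, show j = ((⟨j, hj⟩ : Fin p) : ℕ) from rfl,
    extC_apply, extC_apply]
  exact h.1 (by simpa [Fin.lt_def] using hij)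

lemma Gw_term_pos (hm : 1 < m) {Z : ℕ → ℝ} {a L : ℕ} (h : IncOn Z a L) {k : ℕ}
    (hk : k + 1 < L) : 0 < (Z (a + k + 1) - Z (a + k)) ^ (1 - m) := by
  apply Real.rpow_pos_of_pos
  have h2 := h (Nat.lt_succ_self k) hk
  have e : a + (k + 1) = a + k + 1 := by omega
  rw [e] at h2
  linarith

lemma Gw_nonneg (hm : 1 < m) {Z : ℕ → ℝ} {a L : ℕ} (h : IncOn Z a L) : 0 ≤ Gw m Z a L := by
  apply Finset.sum_nonneg
  intro k hk
  have hk' : k + 1 < L := by have := Finset.mem_range.mp hk; omega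
  exact (Gw_term_pos hm h hk').le

lemma Gw_pos (hm : 1 < m) {Z : ℕ → ℝ} {a L : ℕ} (h : IncOn Z a L) (hL : 2 ≤ L) :
    0 < Gw m Z a L := by
  have h0 : 0 + 1 < L := by omega
  apply Finset.sum_pos'
  · intro k hk
    have hk' : k + 1 < L := by have := Finset.mem_range.mp hk; omega
    exact (Gw_term_pos hm h hk').le
  · exact ⟨0, Finset.mem_range.mpr (by omega), Gw_term_pos hm h h0⟩

lemma Pw_nonneg (Z : ℕ → ℝ) (a L : ℕ) : 0 ≤ Pw m Z a L := by
  apply Finset.sum_nonneg; intro i _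
  apply Finset.sum_nonneg; intro j _
  split
  · exact Real.rpow_nonneg (abs_nonneg _) _
  · exact le_rfl

end S18

namespace S18

open Filter Finset Real

variable {m : ℝ}

lemma incOn_mono {Z : ℕ → ℝ} {a L L' : ℕ} (h : IncOn Z a L) (hL : L' ≤ L) : IncOn Z a L' :=
  fun _ _ hij hj => h hij (lt_of_lt_of_le hj hL)

lemma Pw_succ (Z : ℕ → ℝ) (a L : ℕ) :
    Pw m Z a (L + 1) = Pw m Z a L + 2 * ∑ j ∈ Finset.range L, |Z (a + L) - Z (a + j)| ^ (1 - m) := by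
  rw [Pw, Pw, Finset.sum_range_succ]
  have h1 : ∀ i ∈ Finset.range L,
      (∑ j ∈ Finset.range (L+1), if i ≠ j then |Z (a + i) - Z (a + j)| ^ (1 - m) else 0)
      = (∑ j ∈ Finset.range L, if i ≠ j then |Z (a + i) - Z (a + j)| ^ (1 - m) else 0)
        + |Z (a + L) - Z (a + i)| ^ (1 - m) := by
    intro i hi
    rw [Finset.sum_range_succ, if_pos (Nat.ne_of_lt (Finset.mem_range.mp hi)), abs_sub_comm]
  rw [Finset.sum_congr rfl h1, Finset.sum_add_distrib]
  have h2 : (∑ j ∈ Finset.range (L+1), if L ≠ j then |Z (a + L) - Z (a + j)| ^ (1 - m) else 0)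
      = ∑ j ∈ Finset.range L, |Z (a + L) - Z (a + j)| ^ (1 - m) := by
    rw [Finset.sum_range_succ, if_neg (by simp)]
    rw [add_zero]
    apply Finset.sum_congr rfl
    intro j hj
    rw [if_pos (Nat.ne_of_gt (Finset.mem_range.mp hj))]
  rw [h2]
  ring

lemma Gw_succ (Z : ℕ → ℝ) (a K : ℕ) :
    Gw m Z a (K + 2) = Gw m Z a (K + 1) + (Z (a + K + 1) - Z (a + K)) ^ (1 - m) := by
  rw [Gw, Gw, show K + 2 - 1 = K + 1 from rfl, show K + 1 - 1 = K from rfl,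
    Finset.sum_range_succ]

lemma Pw_le_counting (hm : 1 < m) {Z : ℕ → ℝ} {a : ℕ} :
    ∀ {L : ℕ}, IncOn Z a L → Pw m Z a L ≤ 2 * ((L : ℝ) - 1) * Gw m Z a L := by
  intro L
  induction L with
  | zero => intro _; simp [Pw, Gw]
  | succ K ih =>
    intro hinc
    have hK : IncOn Z a K := incOn_mono hinc (Nat.le_succ K)
    rcases Nat.eq_zero_or_pos K with h0 | hpos
    · subst h0; simp [Pw, Gw]
    · obtain ⟨K', rfl⟩ : ∃ K', K = K' + 1 := ⟨K - 1, by omega⟩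
      rw [Pw_succ, Gw_succ]
      have hu : 0 < (Z (a + K' + 1) - Z (a + K')) ^ (1 - m) :=
        Gw_term_pos hm hinc (by omega)
      have hsum : ∑ j ∈ Finset.range (K' + 1), |Z (a + (K' + 1)) - Z (a + j)| ^ (1 - m)
          ≤ (K' + 1 : ℝ) * (Z (a + K' + 1) - Z (a + K')) ^ (1 - m) := by
        have hbound : ∀ j ∈ Finset.range (K' + 1),
            |Z (a + (K' + 1)) - Z (a + j)| ^ (1 - m)
            ≤ (Z (a + K' + 1) - Z (a + K')) ^ (1 - m) := by
          intro j hj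
          have hj' : j < K' + 1 := Finset.mem_range.mp hj
          have h1 : Z (a + j) ≤ Z (a + K') := by
            rcases Nat.lt_or_ge j K' with h | h
            · exact (hinc h (by omega)).le
            · have : j = K' := by omega
              rw [this]
          have h2 : Z (a + K') < Z (a + (K' + 1)) := by
            have := hinc (Nat.lt_succ_self K') (Nat.lt_succ_self (K' + 1))
            exact this
          have habs : |Z (a + (K' + 1)) - Z (a + j)| = Z (a + (K' + 1)) - Z (a + j) := by
            rw [abs_of_pos]; linarith
          rw [habs]
          have e : a + (K' + 1) = a + K' + 1 := by omega
          rw [e] at h2 ⊢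
          exact Real.rpow_le_rpow_of_nonpos (by linarith) (by linarith) (by linarith)
        calc ∑ j ∈ Finset.range (K' + 1), |Z (a + (K' + 1)) - Z (a + j)| ^ (1 - m)
            ≤ ∑ _j ∈ Finset.range (K' + 1), (Z (a + K' + 1) - Z (a + K')) ^ (1 - m) :=
              Finset.sum_le_sum hbound
          _ = (K' + 1 : ℝ) * (Z (a + K' + 1) - Z (a + K')) ^ (1 - m) := by
              rw [Finset.sum_const, Finset.card_range, nsmul_eq_mul]; push_cast; ring
      have hG : 0 ≤ Gw m Z a (K' + 1) := Gw_nonneg hm hK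
      have hthis := ih hK
      push_cast at hthis ⊢
      nlinarith [hG, hu.le, hsum, hthis, Nat.cast_nonneg (α := ℝ) K']

lemma two_Gw_le_Pw (hm : 1 < m) {Z : ℕ → ℝ} {a : ℕ} :
    ∀ {L : ℕ}, IncOn Z a L → 2 * Gw m Z a L ≤ Pw m Z a L := by
  intro L
  induction L with
  | zero => intro _; simp [Pw, Gw]
  | succ K ih =>
    intro hinc
    have hK : IncOn Z a K := incOn_mono hinc (Nat.le_succ K)
    rcases Nat.eq_zero_or_pos K with h0 | hpos
    · subst h0; simp [Pw, Gw]
    · obtain ⟨K', rfl⟩ : ∃ K', K = K' + 1 := ⟨K - 1, by omega⟩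
      rw [Pw_succ, Gw_succ]
      have hterm : (Z (a + K' + 1) - Z (a + K')) ^ (1 - m)
          ≤ ∑ j ∈ Finset.range (K' + 1), |Z (a + (K' + 1)) - Z (a + j)| ^ (1 - m) := by
        have hmem : K' ∈ Finset.range (K' + 1) := Finset.mem_range.mpr (Nat.lt_succ_self K')
        have h2 : Z (a + K') < Z (a + (K' + 1)) :=
          hinc (Nat.lt_succ_self K') (Nat.lt_succ_self (K' + 1))
        have e : a + (K' + 1) = a + K' + 1 := by omega
        have habs : |Z (a + (K' + 1)) - Z (a + K')| ^ (1 - m)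
            = (Z (a + K' + 1) - Z (a + K')) ^ (1 - m) := by
          rw [abs_of_pos (by linarith), e]
        rw [← habs]
        exact Finset.single_le_sum (f := fun j => |Z (a + (K' + 1)) - Z (a + j)| ^ (1 - m))
          (fun j _ => Real.rpow_nonneg (abs_nonneg _) _) hmem
      have := ih hK
      linarith

lemma Pw_congr {Z W : ℕ → ℝ} {a b L : ℕ} {c : ℝ} (h : ∀ i < L, W (b + i) = Z (a + i) - c) :
    Pw m W b L = Pw m Z a L := by
  apply Finset.sum_congr rfl
  intro i hi
  apply Finset.sum_congr rfl
  intro j hj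
  rw [h i (Finset.mem_range.mp hi), h j (Finset.mem_range.mp hj)]
  have e : Z (a + i) - c - (Z (a + j) - c) = Z (a + i) - Z (a + j) := by ring
  rw [e]

lemma Gw_congr {Z W : ℕ → ℝ} {a b L : ℕ} {c : ℝ} (h : ∀ i < L, W (b + i) = Z (a + i) - c) :
    Gw m W b L = Gw m Z a L := by
  apply Finset.sum_congr rfl
  intro k hk
  have hk' : k < L - 1 := Finset.mem_range.mp hk
  have e1 : b + k + 1 = b + (k + 1) := by omega
  have e2 : a + k + 1 = a + (k + 1) := by omega
  rw [e1, e2, h (k+1) (by omega), h k (by omega)]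
  have e : Z (a + (k + 1)) - c - (Z (a + k) - c) = Z (a + (k + 1)) - Z (a + k) := by ring
  rw [e]

/-- Build an element of `R^L` from a window, with matching pair/gap sums. -/
lemma exists_memR_window (m : ℝ) (Z : ℕ → ℝ) (a L : ℕ) (hL : 1 ≤ L) (hinc : IncOn Z a L) :
    ∃ X : EuclideanSpace ℝ (Fin L), memR L X ∧
      pairSum m L X = Pw m Z a L ∧ gapSum m L X = Gw m Z a L := by
  set c : ℝ := (∑ k ∈ Finset.range L, Z (a + k)) / L with hc
  refine ⟨(WithLp.equiv 2 (Fin L → ℝ)).symm (fun i => Z (a + i) - c), ⟨?_, ?_⟩, ?_, ?_⟩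
  · intro i j hij
    simp only [WithLp.equiv_symm_apply, WithLp.ofLp_toLp]
    have : Z (a + (i : ℕ)) < Z (a + (j : ℕ)) := hinc (by exact hij) j.isLt
    linarith
  · simp only [WithLp.equiv_symm_apply, WithLp.ofLp_toLp]
    rw [Finset.sum_sub_distrib]
    rw [Fin.sum_univ_eq_sum_range (fun k => Z (a + k)) L]
    simp only [Finset.sum_const, Finset.card_univ, Fintype.card_fin, nsmul_eq_mul, hc]
    field_simp
    ring
  · rw [pairSum_eq_Pw]
    apply Pw_congr (c := c)
    intro i hi
    simp only [extC, zero_add, dif_pos hi, WithLp.equiv_symm_apply, WithLp.ofLp_toLp]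
  · rw [gapSum_eq_Gw]
    apply Gw_congr (c := c)
    intro i hi
    simp only [extC, zero_add, dif_pos hi, WithLp.equiv_symm_apply, WithLp.ofLp_toLp]

end S18

namespace S18

open Filter Finset Real

variable {m : ℝ}

def sigSet (m : ℝ) (p : ℕ) : Set ℝ :=
  {r : ℝ | ∃ X : EuclideanSpace ℝ (Fin p), memR p X ∧
    r = pairSum m p X / gapSum m p X}

lemma sig_def (p : ℕ) : sig m p = sSup (sigSet m p) := rfl

lemma exists_memR (p : ℕ) : ∃ X : EuclideanSpace ℝ (Fin p), memR p X := by
  rcases Nat.eq_zero_or_pos p with h0 | hpos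
  · subst h0
    exact ⟨0, fun i j h => absurd i.isLt (by omega), by simp⟩
  · obtain ⟨X, hX, -, -⟩ := exists_memR_window 2 (fun n => (n : ℝ)) 0 p hpos
      (fun i j hij _ => by simpa using (Nat.cast_lt (α := ℝ)).mpr (Nat.add_lt_add_left hij 0))
    exact ⟨X, hX⟩

lemma sigSet_nonempty (p : ℕ) : (sigSet m p).Nonempty := by
  obtain ⟨X, hX⟩ := exists_memR p
  exact ⟨_, X, hX, rfl⟩

lemma pairSum_nonneg (p : ℕ) (X : EuclideanSpace ℝ (Fin p)) : 0 ≤ pairSum m p X := by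
  rw [pairSum_eq_Pw]; exact Pw_nonneg _ _ _

lemma gapSum_nonneg (hm : 1 < m) {p : ℕ} {X : EuclideanSpace ℝ (Fin p)} (hX : memR p X) :
    0 ≤ gapSum m p X := by
  rw [gapSum_eq_Gw]; exact Gw_nonneg hm (memR_incOn hX)

lemma gapSum_pos (hm : 1 < m) {p : ℕ} (hp : 2 ≤ p) {X : EuclideanSpace ℝ (Fin p)}
    (hX : memR p X) : 0 < gapSum m p X := by
  rw [gapSum_eq_Gw]; exact Gw_pos hm (memR_incOn hX) hp

lemma pairSum_le_counting (hm : 1 < m) {p : ℕ} {X : EuclideanSpace ℝ (Fin p)}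
    (hX : memR p X) : pairSum m p X ≤ 2 * ((p : ℝ) - 1) * gapSum m p X := by
  rw [pairSum_eq_Pw, gapSum_eq_Gw]
  exact Pw_le_counting hm (memR_incOn hX)

lemma two_gapSum_le_pairSum (hm : 1 < m) {p : ℕ} {X : EuclideanSpace ℝ (Fin p)}
    (hX : memR p X) : 2 * gapSum m p X ≤ pairSum m p X := by
  rw [pairSum_eq_Pw, gapSum_eq_Gw]
  exact two_Gw_le_Pw hm (memR_incOn hX)

lemma sigSet_bddAbove (hm : 1 < m) (p : ℕ) : BddAbove (sigSet m p) := by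
  refine ⟨2 * p, ?_⟩
  rintro r ⟨X, hX, rfl⟩
  rcases le_or_gt 2 p with hp | hp
  · have hG := gapSum_pos hm hp hX
    rw [div_le_iff₀ hG]
    calc pairSum m p X ≤ 2 * ((p : ℝ) - 1) * gapSum m p X := pairSum_le_counting hm hX
      _ ≤ 2 * p * gapSum m p X := by nlinarith [hG]
  · have hP : pairSum m p X = 0 := by
      interval_cases p
      · simp [pairSum]
      · rw [pairSum]
        rw [Fin.sum_univ_one, Fin.sum_univ_one]
        simp
    simp only [hP, zero_div]
    positivity

lemma sig_nonneg (hm : 1 < m) (p : ℕ) : 0 ≤ sig m p := by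
  obtain ⟨X, hX⟩ := exists_memR p
  have hmem : pairSum m p X / gapSum m p X ∈ sigSet m p := ⟨X, hX, rfl⟩
  have h0 : 0 ≤ pairSum m p X / gapSum m p X :=
    div_nonneg (pairSum_nonneg p X) (gapSum_nonneg hm hX)
  exact h0.trans (le_csSup (sigSet_bddAbove hm p) hmem)

lemma two_le_sig (hm : 1 < m) {p : ℕ} (hp : 2 ≤ p) : 2 ≤ sig m p := by
  obtain ⟨X, hX⟩ := exists_memR p
  have hG := gapSum_pos hm hp hX
  have h2 : 2 ≤ pairSum m p X / gapSum m p X := by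
    rw [le_div_iff₀ hG]
    linarith [two_gapSum_le_pairSum hm hX]
  exact h2.trans (le_csSup (sigSet_bddAbove hm p) ⟨X, hX, rfl⟩)

lemma Pw_le_sig (hm : 1 < m) {Z : ℕ → ℝ} {a L : ℕ} (hinc : IncOn Z a L) :
    Pw m Z a L ≤ sig m L * Gw m Z a L := by
  rcases le_or_gt 2 L with hL | hL
  · obtain ⟨X, hX, hP, hG⟩ := exists_memR_window m Z a L (by omega) hinc
    have hGpos : 0 < Gw m Z a L := Gw_pos hm hinc hL
    have hmem : Pw m Z a L / Gw m Z a L ∈ sigSet m L := ⟨X, hX, by rw [hP, hG]⟩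
    have := le_csSup (sigSet_bddAbove hm L) hmem
    rw [div_le_iff₀ hGpos] at this
    rw [sig_def]
    linarith [this]
  · have hP : Pw m Z a L = 0 := by
      interval_cases L
      · simp [Pw]
      · rw [Pw]
        simp
    have hG : Gw m Z a L = 0 := by
      interval_cases L <;> simp [Gw]
    rw [hP, hG, mul_zero]

lemma pairSum_le_sig (hm : 1 < m) {p : ℕ} {X : EuclideanSpace ℝ (Fin p)} (hX : memR p X) :
    pairSum m p X ≤ sig m p * gapSum m p X := by
  rw [pairSum_eq_Pw, gapSum_eq_Gw]
  exact Pw_le_sig hm (memR_incOn hX)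

lemma sig_eq_zero_of_le_one (hm : 1 < m) {p : ℕ} (hp : p ≤ 1) : sig m p = 0 := by
  apply le_antisymm _ (sig_nonneg hm p)
  apply csSup_le (sigSet_nonempty p)
  rintro r ⟨X, hX, rfl⟩
  have hP : pairSum m p X = 0 := by
    interval_cases p
    · simp [pairSum]
    · rw [pairSum, Fin.sum_univ_one, Fin.sum_univ_one]
      simp
  simp [hP]

/-- Append one point at distance `g` to the right of a configuration. -/
lemma append_lemma (hm : 1 < m) {p : ℕ} (hp : 1 ≤ p) {X : EuclideanSpace ℝ (Fin p)}
    (hX : memR p X) {g : ℝ} (hg : 0 < g) :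
    ∃ W : EuclideanSpace ℝ (Fin (p + 1)), memR (p + 1) W ∧
      gapSum m (p + 1) W = gapSum m p X + g ^ (1 - m) ∧
      pairSum m (p + 1) W = pairSum m p X
        + 2 * ∑ j ∈ Finset.range p, |extC p X (p - 1) + g - extC p X j| ^ (1 - m) := by
  set Z : ℕ → ℝ := fun n => if n < p then extC p X n else extC p X (p - 1) + g with hZ
  have hext : ∀ i < p, Z i = extC p X i := fun i hi => by simp [hZ, hi]
  have hlast : Z p = extC p X (p - 1) + g := by simp [hZ]
  have hmonoX : IncOn (extC p X) 0 p := memR_incOn hX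
  have hXle : ∀ j < p, extC p X j ≤ extC p X (p - 1) := by
    intro j hj
    rcases Nat.lt_or_ge j (p - 1) with h | h
    · have := hmonoX h (by omega)
      simp only [zero_add] at this
      linarith
    · have : j = p - 1 := by omega
      rw [this]
  have hinc : IncOn Z 0 (p + 1) := by
    intro i j hij hj
    simp only [zero_add]
    rcases Nat.lt_or_ge j p with hjp | hjp
    · rw [hext i (by omega), hext j hjp]
      have := hmonoX hij hjp
      simpa using this
    · have hjeq : j = p := by omega
      rw [hjeq, hlast, hext i (by omega)]
      have := hXle i (by omega)
      linarith
  obtain ⟨W, hW, hPW, hGW⟩ := exists_memR_window m Z 0 (p + 1) (by omega) hinc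
  refine ⟨W, hW, ?_, ?_⟩
  · rw [hGW]
    obtain ⟨q, rfl⟩ : ∃ q, p = q + 1 := ⟨p - 1, by omega⟩
    rw [Gw_succ]
    have e1 : Gw m Z 0 (q + 1) = Gw m (extC (q+1) X) 0 (q + 1) := by
      apply Gw_congr (c := 0)
      intro i hi
      simp only [zero_add]
      rw [hext i hi, sub_zero]
    rw [e1, ← gapSum_eq_Gw]
    congr 1
    have e2 : (0 : ℕ) + q + 1 = q + 1 := by omega
    have e3 : (0 : ℕ) + q = q := by omega
    rw [e2, e3, hlast, hext q (by omega)]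
    have : q + 1 - 1 = q := by omega
    rw [this]
    ring_nf
  · rw [hPW, Pw_succ]
    have e1 : Pw m Z 0 p = Pw m (extC p X) 0 p := by
      apply Pw_congr (c := 0)
      intro i hi
      simp only [zero_add]
      rw [hext i hi, sub_zero]
    rw [e1, ← pairSum_eq_Pw]
    have hterm : ∀ j ∈ Finset.range p, |Z (0 + p) - Z (0 + j)| ^ (1 - m)
        = |extC p X (p - 1) + g - extC p X j| ^ (1 - m) := by
      intro j hj
      have hj' : j < p := Finset.mem_range.mp hj
      rw [show (0:ℕ) + p = p from by omega, show (0:ℕ) + j = j from by omega,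
        hlast, hext j hj']
    rw [Finset.sum_congr rfl hterm]

end S18

namespace S18

open Filter Finset Real

variable {m : ℝ}

lemma sig_le_succ (hm : 1 < m) (p : ℕ) : sig m p ≤ sig m (p + 1) := by
  rcases le_or_gt p 1 with hp | hp
  · rw [sig_eq_zero_of_le_one hm hp]
    exact sig_nonneg hm (p + 1)
  · rw [sig_def]
    apply csSup_le (sigSet_nonempty p)
    rintro r ⟨X, hX, rfl⟩
    have hG : 0 < gapSum m p X := gapSum_pos hm hp hX
    set P := pairSum m p X
    set G := gapSum m p X
    have hs1 : 0 ≤ sig m (p + 1) := sig_nonneg hm (p + 1)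
    have key : ∀ t : ℝ, 0 < t → P ≤ sig m (p + 1) * (G + t) := by
      intro t ht
      set g : ℝ := t ^ (1 - m)⁻¹ with hgdef
      have hg : 0 < g := Real.rpow_pos_of_pos ht _
      have hgt : g ^ (1 - m) = t := by
        rw [hgdef, ← Real.rpow_mul ht.le, inv_mul_cancel₀ (by linarith : (1 : ℝ) - m ≠ 0),
          Real.rpow_one]
      obtain ⟨W, hW, hGW, hPW⟩ := append_lemma hm (by omega : 1 ≤ p) hX hg
      have hmem : pairSum m (p+1) W / gapSum m (p+1) W ∈ sigSet m (p + 1) := ⟨W, hW, rfl⟩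
      have hle := le_csSup (sigSet_bddAbove hm (p+1)) hmem
      have hGW' : gapSum m (p+1) W = G + t := by rw [hGW, hgt]
      have hGWpos : 0 < G + t := by linarith
      rw [div_le_iff₀ (by rw [hGW']; exact hGWpos)] at hle
      have hPge : P ≤ pairSum m (p+1) W := by
        rw [hPW]
        have : 0 ≤ 2 * ∑ j ∈ Finset.range p, |extC p X (p - 1) + g - extC p X j| ^ (1 - m) := by
          positivity
        linarith
      calc P ≤ pairSum m (p+1) W := hPge
        _ ≤ sSup (sigSet m (p+1)) * gapSum m (p+1) W := hle
        _ = sig m (p+1) * (G + t) := by rw [← sig_def, hGW']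
    have hPG : P ≤ sig m (p + 1) * G := by
      apply le_of_forall_pos_le_add
      intro ε hε
      have := key (ε / (sig m (p+1) + 1)) (by positivity)
      calc P ≤ sig m (p+1) * (G + ε / (sig m (p+1) + 1)) := this
        _ = sig m (p+1) * G + sig m (p+1) * (ε / (sig m (p+1) + 1)) := by ring
        _ ≤ sig m (p+1) * G + ε := by
            have h1 : sig m (p+1) * (ε / (sig m (p+1) + 1)) ≤ ε := by
              rw [mul_div_assoc']
              rw [div_le_iff₀ (by linarith)]
              nlinarith
            linarith
    rw [div_le_iff₀ hG]
    exact hPG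

lemma sig_mono (hm : 1 < m) {p q : ℕ} (h : p ≤ q) : sig m p ≤ sig m q := by
  induction q with
  | zero => simp_all
  | succ n ih =>
    rcases Nat.lt_or_ge p (n + 1) with h' | h'
    · exact (ih (by omega)).trans (sig_le_succ hm n)
    · have : p = n + 1 := by omega
      rw [this]

/-- Strict monotonicity of `sig`, given a maximizer at level `p`. -/
lemma sig_lt_succ (hm : 1 < m) {p : ℕ} (hp : 2 ≤ p)
    (hatt : ∃ X : EuclideanSpace ℝ (Fin p), memR p X ∧
      pairSum m p X = sig m p * gapSum m p X) :
    sig m p < sig m (p + 1) := by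
  obtain ⟨X, hX, hPX⟩ := hatt
  have hG : 0 < gapSum m p X := gapSum_pos hm hp hX
  set P := pairSum m p X with hPdef
  set G := gapSum m p X with hGdef
  have hcount : P ≤ 2 * ((p : ℝ) - 1) * G := pairSum_le_counting hm hX
  set D : ℝ := extC p X (p - 1) - extC p X 0 with hDdef
  have hD : 0 < D := by
    have := memR_incOn hX (show 0 < p - 1 by omega) (show p - 1 < p by omega)
    simp only [zero_add] at this
    simp [hDdef]
    linarith
  -- choose ρ strictly between 1 and p/(p-1)
  set ρ : ℝ := (2 * p - 1) / (2 * p - 2) with hρdef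
  have hpR : (2 : ℝ) ≤ (p : ℝ) := by exact_mod_cast hp
  have hρ1 : 1 < ρ := by
    rw [hρdef, lt_div_iff₀ (by linarith)]
    linarith
  set κ : ℝ := ρ ^ (m - 1)⁻¹ with hκdef
  have hκ1 : 1 < κ := by
    rw [hκdef]
    exact (Real.one_lt_rpow_iff_of_pos (by linarith)).mpr
      (Or.inl ⟨hρ1, inv_pos.mpr (by linarith)⟩)
  set g : ℝ := D / (κ - 1) with hgdef
  have hg : 0 < g := by
    apply div_pos hD
    linarith
  have hgκ : g * (κ - 1) = D := by
    rw [hgdef]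
    exact div_mul_cancel₀ D (by linarith : κ - 1 ≠ 0)
  have hgD : (g + D) / g = κ := by
    rw [div_eq_iff (ne_of_gt hg)]
    linarith [hgκ]
  have hκρ : κ ^ (m - 1) = ρ := by
    rw [hκdef, ← Real.rpow_mul (by positivity), inv_mul_cancel₀ (by linarith : m - 1 ≠ 0),
      Real.rpow_one]
  have hBpos : 0 < (g + D) ^ (1 - m) := Real.rpow_pos_of_pos (by linarith) _
  have htpos : 0 < g ^ (1 - m) := Real.rpow_pos_of_pos hg _
  have hratio : g ^ (1 - m) / (g + D) ^ (1 - m) = ρ := by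
    rw [← Real.div_rpow hg.le (by linarith : (0:ℝ) ≤ g + D)]
    have hfrac : g / (g + D) = κ⁻¹ := by rw [← hgD, inv_div]
    rw [hfrac, Real.inv_rpow (by positivity), ← Real.rpow_neg (by positivity), neg_sub, hκρ]
  have hA : g ^ (1 - m) = ρ * (g + D) ^ (1 - m) := by
    field_simp at hratio
    linarith [hratio]
  have hρval : 2 * ((p : ℝ) - 1) * ρ = 2 * (p : ℝ) - 1 := by
    have h2 : (2 * (p:ℝ) - 2) ≠ 0 := by linarith
    rw [hρdef]
    rw [mul_div_assoc', div_eq_iff h2]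
    ring
  -- key numeric inequality : 2(p-1) g^{1-m} < 2p (g+D)^{1-m}
  have hkey : 2 * ((p : ℝ) - 1) * g ^ (1 - m) < 2 * (p : ℝ) * (g + D) ^ (1 - m) := by
    rw [hA]
    nlinarith [hBpos]
  -- the appended configuration
  obtain ⟨W, hW, hGW, hPW⟩ := append_lemma hm (by omega : 1 ≤ p) hX hg
  set t : ℝ := g ^ (1 - m) with htdef
  set B : ℝ := (g + D) ^ (1 - m) with hBdef
  -- lower bound for the added interaction terms
  have hXle : ∀ j, j < p → extC p X j ≤ extC p X (p - 1) := by
    intro j hj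
    rcases Nat.lt_or_ge j (p - 1) with h | h
    · have := memR_incOn hX h (show p - 1 < p by omega)
      simp only [zero_add] at this
      linarith
    · have : j = p - 1 := by omega
      rw [this]
  have hXge : ∀ j, j < p → extC p X 0 ≤ extC p X j := by
    intro j hj
    rcases Nat.eq_zero_or_pos j with h | h
    · rw [h]
    · have := memR_incOn hX h hj
      simp only [zero_add] at this
      linarith
  have hdelta : (p : ℝ) * B ≤ ∑ j ∈ Finset.range p, |extC p X (p - 1) + g - extC p X j| ^ (1 - m) := by
    have hterm : ∀ j ∈ Finset.range p, B ≤ |extC p X (p - 1) + g - extC p X j| ^ (1 - m) := by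
      intro j hj
      have hj' : j < p := Finset.mem_range.mp hj
      have h1 : extC p X j ≤ extC p X (p - 1) := hXle j hj'
      have h2 : extC p X 0 ≤ extC p X j := hXge j hj'
      have hv : 0 < extC p X (p - 1) + g - extC p X j := by linarith
      have habs : |extC p X (p - 1) + g - extC p X j| = extC p X (p - 1) + g - extC p X j :=
        abs_of_pos hv
      rw [habs, hBdef]
      apply Real.rpow_le_rpow_of_nonpos hv _ (by linarith)
      rw [hDdef]
      linarith
    calc (p : ℝ) * B = ∑ _j ∈ Finset.range p, B := by
          rw [Finset.sum_const, Finset.card_range, nsmul_eq_mul]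
      _ ≤ _ := Finset.sum_le_sum hterm
  -- conclude
  have hGWpos : 0 < gapSum m (p + 1) W := by
    rw [hGW]
    linarith
  have hmem : pairSum m (p+1) W / gapSum m (p+1) W ∈ sigSet m (p + 1) := ⟨W, hW, rfl⟩
  have hle := le_csSup (sigSet_bddAbove hm (p+1)) hmem
  rw [← sig_def] at hle
  apply lt_of_lt_of_le _ hle
  rw [lt_div_iff₀ hGWpos, hGW, hPW]
  -- sig p * (G + t) < P + 2 * δ
  set σ : ℝ := sig m p with hσdef
  have hsig : σ * G = P := hPX.symm
  have hsigle : σ ≤ 2 * ((p:ℝ) - 1) := by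
    have h3 : σ * G ≤ (2 * ((p:ℝ) - 1)) * G := by rw [hsig]; exact hcount
    exact le_of_mul_le_mul_right h3 hG
  have h4 : σ * t ≤ 2 * ((p:ℝ) - 1) * t := mul_le_mul_of_nonneg_right hsigle htpos.le
  have h5 : 2 * (p:ℝ) * B ≤ 2 * ∑ j ∈ Finset.range p, |extC p X (p - 1) + g - extC p X j| ^ (1 - m) := by
    linarith [hdelta]
  have expand : σ * (G + t) = P + σ * t := by rw [mul_add, hsig]
  linarith [h4, hkey, h5, expand]

end S18

namespace S18

open Filter Finset Real

variable {m : ℝ}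

lemma sum_range_split (f : ℕ → ℝ) (a b : ℕ) :
    ∑ i ∈ Finset.range (a + b), f i
      = ∑ i ∈ Finset.range a, f i + ∑ i ∈ Finset.range b, f (a + i) := by
  induction b with
  | zero => simp
  | succ n ih =>
    rw [show a + (n + 1) = (a + n) + 1 from rfl, Finset.sum_range_succ, ih,
      Finset.sum_range_succ]
    ring

lemma Pw_split (Z : ℕ → ℝ) (a K R : ℕ) :
    Pw m Z a (K + R) = Pw m Z a K + Pw m Z (a + K) R
      + 2 * ∑ i ∈ Finset.range K, ∑ j ∈ Finset.range R,
          |Z (a + i) - Z (a + K + j)| ^ (1 - m) := by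
  induction R with
  | zero => simp [Pw]
  | succ R ih =>
    rw [show K + (R + 1) = (K + R) + 1 from rfl, Pw_succ, ih, Pw_succ]
    have hsplit : ∑ j ∈ Finset.range (K + R), |Z (a + (K + R)) - Z (a + j)| ^ (1 - m)
        = ∑ j ∈ Finset.range K, |Z (a + (K + R)) - Z (a + j)| ^ (1 - m)
          + ∑ j ∈ Finset.range R, |Z (a + (K + R)) - Z (a + (K + j))| ^ (1 - m) := by
      rw [sum_range_split]
    have e1 : ∀ j, a + (K + j) = a + K + j := fun j => by omega
    have e2 : ∀ i ∈ Finset.range K,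
        |Z (a + (K + R)) - Z (a + i)| ^ (1 - m) = |Z (a + i) - Z (a + K + R)| ^ (1 - m) := by
      intro i _
      rw [abs_sub_comm, e1]
    have e3 : ∀ j ∈ Finset.range R,
        |Z (a + (K + R)) - Z (a + (K + j))| ^ (1 - m)
          = |Z (a + K + R) - Z (a + K + j)| ^ (1 - m) := by
      intro j _
      rw [e1, e1]
    rw [hsplit, Finset.sum_congr rfl e2, Finset.sum_congr rfl e3]
    have e4 : ∀ i ∈ Finset.range K,
        (∑ j ∈ Finset.range (R + 1), |Z (a + i) - Z (a + K + j)| ^ (1 - m))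
        = (∑ j ∈ Finset.range R, |Z (a + i) - Z (a + K + j)| ^ (1 - m))
          + |Z (a + i) - Z (a + K + R)| ^ (1 - m) := by
      intro i _
      rw [Finset.sum_range_succ]
    rw [Finset.sum_congr rfl e4, Finset.sum_add_distrib]
    ring

lemma Gw_split_le (hm : 1 < m) {Z : ℕ → ℝ} {a L K : ℕ} (hinc : IncOn Z a L) (hK : K ≤ L) :
    Gw m Z a K + Gw m Z (a + K) (L - K) ≤ Gw m Z a L := by
  classical
  set u : ℕ → ℝ := fun k => (Z (a + k + 1) - Z (a + k)) ^ (1 - m) with hu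
  have hG2 : Gw m Z (a + K) (L - K) = ∑ k ∈ (Finset.range (L - K - 1)).image (fun k => K + k), u k := by
    rw [Finset.sum_image (by intro x _ y _ h; simp only at h; omega)]
    apply Finset.sum_congr rfl
    intro k _
    have e1 : a + (K + k) + 1 = a + K + k + 1 := by omega
    have e2 : a + (K + k) = a + K + k := by omega
    show (Z (a + K + k + 1) - Z (a + K + k)) ^ (1 - m)
      = (Z (a + (K + k) + 1) - Z (a + (K + k))) ^ (1 - m)
    rw [e1, e2]
  have hsub : Finset.range (K - 1) ∪ (Finset.range (L - K - 1)).image (fun k => K + k)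
      ⊆ Finset.range (L - 1) := by
    intro x hx
    rcases Finset.mem_union.mp hx with h | h
    · have := Finset.mem_range.mp h
      exact Finset.mem_range.mpr (by omega)
    · obtain ⟨k, hk, rfl⟩ := Finset.mem_image.mp h
      have := Finset.mem_range.mp hk
      exact Finset.mem_range.mpr (by omega)
  have hdisj : Disjoint (Finset.range (K - 1)) ((Finset.range (L - K - 1)).image (fun k => K + k)) := by
    rw [Finset.disjoint_left]
    intro x hx hx'
    have h1 := Finset.mem_range.mp hx
    obtain ⟨k, hk, rfl⟩ := Finset.mem_image.mp hx'
    omega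
  have hnonneg : ∀ k ∈ Finset.range (L - 1), 0 ≤ u k := by
    intro k hk
    exact (Gw_term_pos hm hinc (by have := Finset.mem_range.mp hk; omega)).le
  calc Gw m Z a K + Gw m Z (a + K) (L - K)
      = ∑ k ∈ Finset.range (K - 1) ∪ (Finset.range (L - K - 1)).image (fun k => K + k), u k := by
        rw [Finset.sum_union hdisj, ← hG2]; rfl
    _ ≤ ∑ k ∈ Finset.range (L - 1), u k := by
        apply Finset.sum_le_sum_of_subset_of_nonneg hsub
        intro k hk _
        exact hnonneg k hk
    _ = Gw m Z a L := rfl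

end S18

namespace S18

open Filter Finset Real Topology

variable {m : ℝ}

lemma incOn_window {Z : ℕ → ℝ} {L : ℕ} (h : IncOn Z 0 L) {b L' : ℕ} (hb : b + L' ≤ L) :
    IncOn Z b L' := by
  intro i j hij hj
  have h1 := h (show b + i < b + j by omega) (show b + j < L by omega)
  simpa using h1

/-- If all coordinates converge and two consecutive limits at the junction `K` differ,
then eventually the pair sum is controlled by `sig (L-1)` times the gap sum. -/
lemma collapse_bound (hm : 1 < m) {L : ℕ} (hL : 2 ≤ L)
    {Z : ℕ → ℕ → ℝ} (hinc : ∀ n, IncOn (Z n) 0 L)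
    {Y : ℕ → ℝ} (hco : ∀ i, i < L → Tendsto (fun n => Z n i) atTop (𝓝 (Y i)))
    (hne : Y 0 < Y (L - 1)) :
    ∃ C : ℝ, ∀ᶠ n in atTop, Pw m (Z n) 0 L ≤ sig m (L - 1) * Gw m (Z n) 0 L + C := by
  -- Y is weakly monotone on the window
  have hmono : ∀ i j, i ≤ j → j < L → Y i ≤ Y j := by
    intro i j hij hj
    rcases eq_or_lt_of_le hij with rfl | hij'
    · exact le_rfl
    · apply le_of_tendsto_of_tendsto (hco i (by omega)) (hco j hj)
      filter_upwards with n
      have := hinc n (show 0 + i < 0 + j by omega) (show 0 + j < L by omega)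
      simpa using this.le
  -- find a junction
  have hjunction : ∃ K, 0 < K ∧ K < L ∧ Y (K - 1) < Y K := by
    by_contra hcon
    push_neg at hcon
    have hall : ∀ j, j < L → Y j ≤ Y 0 := by
      intro j
      induction j with
      | zero => intro _; exact le_rfl
      | succ k ih =>
        intro hk
        have h1 := hcon (k + 1) (by omega) hk
        simp only [Nat.add_sub_cancel] at h1
        exact h1.trans (ih (by omega))
    exact absurd (hall (L - 1) (by omega)) (by linarith)
  obtain ⟨K, hK0, hKL, hjump⟩ := hjunction
  -- cross terms converge
  set crossY : ℝ := ∑ i ∈ Finset.range K, ∑ j ∈ Finset.range (L - K),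
      |Y i - Y (K + j)| ^ (1 - m) with hcrossY
  have hcross_tendsto : Tendsto (fun n => ∑ i ∈ Finset.range K, ∑ j ∈ Finset.range (L - K),
      |Z n i - Z n (K + j)| ^ (1 - m)) atTop (𝓝 crossY) := by
    apply tendsto_finset_sum
    intro i hi
    apply tendsto_finset_sum
    intro j hj
    have hiK : i < K := Finset.mem_range.mp hi
    have hjK : K + j < L := by have := Finset.mem_range.mp hj; omega
    have hYlt : Y i < Y (K + j) := by
      calc Y i ≤ Y (K - 1) := hmono i (K - 1) (by omega) (by omega)
        _ < Y K := hjump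
        _ ≤ Y (K + j) := hmono K (K + j) (by omega) hjK
    have hbase : Tendsto (fun n => Z n i - Z n (K + j)) atTop (𝓝 (Y i - Y (K + j))) :=
      (hco i (by omega)).sub (hco (K + j) hjK)
    have hcont : ContinuousAt (fun x : ℝ => |x| ^ (1 - m)) (Y i - Y (K + j)) := by
      apply ContinuousAt.rpow_const
      · exact continuous_abs.continuousAt
      · left
        rw [abs_ne_zero]
        linarith
    exact hcont.tendsto.comp hbase
  have hev : ∀ᶠ n in atTop, (∑ i ∈ Finset.range K, ∑ j ∈ Finset.range (L - K),
      |Z n i - Z n (K + j)| ^ (1 - m)) ≤ crossY + 1 :=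
    hcross_tendsto.eventually_le_const (by linarith)
  refine ⟨2 * (crossY + 1), ?_⟩
  filter_upwards [hev] with n hn
  -- split the pair sum at the junction
  have hsplit := Pw_split (m := m) (Z n) 0 K (L - K)
  rw [show K + (L - K) = L from by omega] at hsplit
  have hincL : IncOn (Z n) 0 K := incOn_mono (hinc n) (by omega)
  have hincR : IncOn (Z n) (0 + K) (L - K) := by
    rw [Nat.zero_add]
    exact incOn_window (hinc n) (by omega)
  have hPl : Pw m (Z n) 0 K ≤ sig m (L - 1) * Gw m (Z n) 0 K := by
    calc Pw m (Z n) 0 K ≤ sig m K * Gw m (Z n) 0 K := Pw_le_sig hm hincL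
      _ ≤ sig m (L - 1) * Gw m (Z n) 0 K := by
          apply mul_le_mul_of_nonneg_right (sig_mono hm (by omega)) (Gw_nonneg hm hincL)
  have hPr : Pw m (Z n) (0 + K) (L - K) ≤ sig m (L - 1) * Gw m (Z n) (0 + K) (L - K) := by
    calc Pw m (Z n) (0 + K) (L - K) ≤ sig m (L - K) * Gw m (Z n) (0 + K) (L - K) :=
          Pw_le_sig hm hincR
      _ ≤ sig m (L - 1) * Gw m (Z n) (0 + K) (L - K) := by
          apply mul_le_mul_of_nonneg_right (sig_mono hm (by omega)) (Gw_nonneg hm hincR)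
  have hGsplit : Gw m (Z n) 0 K + Gw m (Z n) (0 + K) (L - K) ≤ Gw m (Z n) 0 L :=
    Gw_split_le hm (hinc n) (by omega)
  have hsig0 : 0 ≤ sig m (L - 1) := sig_nonneg hm _
  have hcrossle : ∑ i ∈ Finset.range K, ∑ j ∈ Finset.range (L - K),
      |Z n (0 + i) - Z n (0 + K + j)| ^ (1 - m) ≤ crossY + 1 := by
    have e : ∀ i ∈ Finset.range K, (∑ j ∈ Finset.range (L - K),
        |Z n (0 + i) - Z n (0 + K + j)| ^ (1 - m)) = ∑ j ∈ Finset.range (L - K),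
        |Z n i - Z n (K + j)| ^ (1 - m) := by
      intro i _
      apply Finset.sum_congr rfl
      intro j _
      rw [show 0 + i = i from by omega, show 0 + K + j = K + j from by omega]
    rw [Finset.sum_congr rfl e]
    exact hn
  rw [hsplit]
  nlinarith [hPl, hPr, hGsplit, hsig0, hcrossle]

lemma Gw_tendsto_atTop (hm : 1 < m) {L : ℕ} {Z : ℕ → ℕ → ℝ}
    (hinc : ∀ n, IncOn (Z n) 0 L) {i : ℕ} (hi : i + 1 < L)
    (h0 : Tendsto (fun n => Z n (i + 1) - Z n i) atTop (𝓝 0)) :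
    Tendsto (fun n => Gw m (Z n) 0 L) atTop atTop := by
  set gap : ℕ → ℝ := fun n => Z n (i + 1) - Z n i with hgap
  have hgappos : ∀ n, 0 < gap n := by
    intro n
    have := hinc n (Nat.lt_succ_self i) hi
    simp only [zero_add] at this
    simp [hgap]
    linarith
  have h1 : Tendsto gap atTop (𝓝[>] 0) := by
    apply tendsto_nhdsWithin_of_tendsto_nhds_of_eventually_within _ h0
    filter_upwards with n
    exact hgappos n
  have h2 : Tendsto (fun n => (gap n)⁻¹) atTop atTop := tendsto_inv_nhdsGT_zero.comp h1
  have h3 : Tendsto (fun n => ((gap n)⁻¹) ^ (m - 1)) atTop atTop :=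
    (tendsto_rpow_atTop (by linarith : (0:ℝ) < m - 1)).comp h2
  have h4 : Tendsto (fun n => (gap n) ^ (1 - m)) atTop atTop := by
    apply h3.congr
    intro n
    rw [Real.inv_rpow (hgappos n).le, ← Real.rpow_neg (hgappos n).le, neg_sub]
  apply tendsto_atTop_mono _ h4
  intro n
  have hterm : (gap n) ^ (1 - m) = (Z n (0 + i + 1) - Z n (0 + i)) ^ (1 - m) := by
    rw [show (0:ℕ) + i + 1 = i + 1 from by omega, show (0:ℕ) + i = i from by omega]
  rw [hterm]
  apply Finset.single_le_sum (f := fun k => (Z n (0 + k + 1) - Z n (0 + k)) ^ (1 - m))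
    (fun k hk => (Gw_term_pos hm (hinc n) (by have := Finset.mem_range.mp hk; omega)).le)
    (Finset.mem_range.mpr (by omega))

end S18

namespace S18

open Filter Finset Real Topology

variable {m : ℝ}

lemma smul_coord {p : ℕ} (c : ℝ) (X : EuclideanSpace ℝ (Fin p)) (i : Fin p) :
    (c • X) i = c * X i := rfl

lemma memR_smul {p : ℕ} {c : ℝ} (hc : 0 < c) {X : EuclideanSpace ℝ (Fin p)}
    (hX : memR p X) : memR p (c • X) := by
  constructor
  · intro i j hij
    have := hX.1 hij
    simp only [smul_coord]
    exact (mul_lt_mul_iff_right₀ hc).mpr this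
  · have : ∑ i, (c • X) i = c * ∑ i, X i := by
      rw [Finset.mul_sum]
      exact Finset.sum_congr rfl fun i _ => rfl
    rw [this, hX.2, mul_zero]

lemma pairSum_smul {p : ℕ} {c : ℝ} (hc : 0 < c) (X : EuclideanSpace ℝ (Fin p)) :
    pairSum m p (c • X) = c ^ (1 - m) * pairSum m p X := by
  rw [pairSum, pairSum, Finset.mul_sum]
  apply Finset.sum_congr rfl
  intro i _
  rw [Finset.mul_sum]
  apply Finset.sum_congr rfl
  intro j _
  by_cases h : i = j
  · simp [h]
  · rw [if_pos h, if_pos h, smul_coord, smul_coord, ← mul_sub, abs_mul, abs_of_pos hc,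
      Real.mul_rpow hc.le (abs_nonneg _)]

lemma gapSum_smul {p : ℕ} {c : ℝ} (hc : 0 < c) {X : EuclideanSpace ℝ (Fin p)}
    (hX : memR p X) : gapSum m p (c • X) = c ^ (1 - m) * gapSum m p X := by
  rw [gapSum, gapSum, Finset.mul_sum]
  apply Finset.sum_congr rfl
  intro i _
  by_cases h : (i : ℕ) + 1 < p
  · rw [dif_pos h, dif_pos h, smul_coord, smul_coord, ← mul_sub]
    have hgap : 0 < X ⟨(i:ℕ)+1, h⟩ - X i := by
      have : i < (⟨(i:ℕ)+1, h⟩ : Fin p) := by simp [Fin.lt_def]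
      have := hX.1 this
      linarith
    rw [Real.mul_rpow hc.le hgap.le]
  · simp [h]

lemma ratio_smul (hm : 1 < m) {p : ℕ} {c : ℝ} (hc : 0 < c) {X : EuclideanSpace ℝ (Fin p)}
    (hX : memR p X) :
    pairSum m p (c • X) / gapSum m p (c • X) = pairSum m p X / gapSum m p X := by
  rw [pairSum_smul hc, gapSum_smul hc hX, mul_div_mul_left]
  exact ne_of_gt (Real.rpow_pos_of_pos hc _)

lemma pairSum_two {X : EuclideanSpace ℝ (Fin 2)} (hX : memR 2 X) :
    pairSum m 2 X = 2 * (X 1 - X 0) ^ (1 - m) := by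
  have h01 : X 0 < X 1 := hX.1 (by norm_num : (0 : Fin 2) < 1)
  rw [pairSum]
  simp only [Fin.sum_univ_two]
  rw [if_neg (by norm_num), if_pos (by norm_num), if_pos (by norm_num), if_neg (by norm_num)]
  rw [abs_sub_comm (X 0) (X 1), abs_of_pos (by linarith : (0:ℝ) < X 1 - X 0)]
  ring

lemma gapSum_two (X : EuclideanSpace ℝ (Fin 2)) :
    gapSum m 2 X = (X 1 - X 0) ^ (1 - m) := by
  rw [gapSum]
  simp only [Fin.sum_univ_two]
  norm_num

lemma sig_two (hm : 1 < m) : sig m 2 = 2 := by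
  apply le_antisymm
  · apply csSup_le (sigSet_nonempty 2)
    rintro r ⟨X, hX, rfl⟩
    have h01 : X 0 < X 1 := hX.1 (by norm_num : (0 : Fin 2) < 1)
    rw [pairSum_two hX, gapSum_two]
    rw [mul_div_assoc, div_self (ne_of_gt (Real.rpow_pos_of_pos (by linarith) _)), mul_one]
  · obtain ⟨X, hX⟩ := exists_memR 2
    have h01 : X 0 < X 1 := hX.1 (by norm_num : (0 : Fin 2) < 1)
    have : (2 : ℝ) = pairSum m 2 X / gapSum m 2 X := by
      rw [pairSum_two hX, gapSum_two, mul_div_assoc,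
        div_self (ne_of_gt (Real.rpow_pos_of_pos (by linarith) _)), mul_one]
    rw [this, sig_def]
    exact le_csSup (sigSet_bddAbove hm 2) ⟨X, hX, rfl⟩

lemma att_two (hm : 1 < m) : ∃ X : EuclideanSpace ℝ (Fin 2), memR 2 X ∧
    pairSum m 2 X = sig m 2 * gapSum m 2 X := by
  obtain ⟨X, hX⟩ := exists_memR 2
  exact ⟨X, hX, by rw [pairSum_two hX, gapSum_two, sig_two hm]⟩

lemma coord_bounds {p : ℕ} (hp : 1 ≤ p) {X : EuclideanSpace ℝ (Fin p)} (hX : memR p X)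
    (hdiam : X ⟨p - 1, by omega⟩ - X ⟨0, by omega⟩ = 1) : ∀ i : Fin p, |X i| ≤ 1 := by
  set z : Fin p := ⟨0, by omega⟩
  set l : Fin p := ⟨p - 1, by omega⟩
  have hmon := hX.1.monotone
  have hzi : ∀ i : Fin p, X z ≤ X i := fun i => hmon (by simp [Fin.le_def, z])
  have hil : ∀ i : Fin p, X i ≤ X l := fun i => hmon (by simp [Fin.le_def, l]; omega)
  have hz0 : X z ≤ 0 := by
    by_contra h
    push_neg at h
    have hsum : (Finset.univ.card : ℕ) • X z ≤ ∑ i, X i := Finset.card_nsmul_le_sum _ _ _ (fun i _ => hzi i)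
    rw [hX.2] at hsum
    have hcard : (Finset.univ : Finset (Fin p)).card = p := by simp
    rw [hcard, nsmul_eq_mul] at hsum
    nlinarith [(Nat.one_le_cast (α := ℝ)).mpr hp]
  have hl0 : 0 ≤ X l := by
    by_contra h
    push_neg at h
    have hsum : ∑ i, X i ≤ (Finset.univ.card : ℕ) • X l := Finset.sum_le_card_nsmul _ _ _ (fun i _ => hil i)
    rw [hX.2] at hsum
    have hcard : (Finset.univ : Finset (Fin p)).card = p := by simp
    rw [hcard, nsmul_eq_mul] at hsum
    nlinarith [(Nat.one_le_cast (α := ℝ)).mpr hp]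
  intro i
  rw [abs_le]
  constructor
  · have := hzi i
    have : X l - 1 ≤ X i := by linarith [hdiam]
    linarith
  · have := hil i
    linarith [hdiam, hz0]

lemma norm_le_sqrt {p : ℕ} {X : EuclideanSpace ℝ (Fin p)} (h : ∀ i, |X i| ≤ 1) :
    ‖X‖ ≤ Real.sqrt p := by
  rw [EuclideanSpace.norm_eq]
  apply Real.sqrt_le_sqrt
  calc ∑ i, ‖X i‖ ^ 2 ≤ ∑ _i : Fin p, (1 : ℝ) := by
        apply Finset.sum_le_sum
        intro i _
        rw [Real.norm_eq_abs]
        nlinarith [h i, abs_nonneg (X i)]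
    _ = p := by simp

lemma pairSum_tendsto {p : ℕ} {X_ : ℕ → EuclideanSpace ℝ (Fin p)}
    {Y : EuclideanSpace ℝ (Fin p)} (hY : StrictMono fun i => Y i)
    (hco : ∀ i : Fin p, Tendsto (fun n => X_ n i) atTop (𝓝 (Y i))) :
    Tendsto (fun n => pairSum m p (X_ n)) atTop (𝓝 (pairSum m p Y)) := by
  rw [pairSum]
  apply tendsto_finset_sum
  intro i _
  have : ∀ n, (∑ j : Fin p, if i ≠ j then |X_ n i - X_ n j| ^ (1 - m) else 0)
      = ∑ j : Fin p, if i ≠ j then |X_ n i - X_ n j| ^ (1 - m) else 0 := fun n => rfl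
  apply tendsto_finset_sum
  intro j _
  by_cases h : i = j
  · simp only [h, ne_eq, not_true_eq_false, if_false]
    exact tendsto_const_nhds
  · simp only [ne_eq, h, not_false_eq_true, if_true]
    have hne : Y i - Y j ≠ 0 := by
      rcases lt_or_gt_of_ne h with h' | h'
      · have := hY h'; intro hc; simp only at this; linarith [sub_eq_zero.mp hc]
      · have := hY h'; intro hc; simp only at this; linarith [sub_eq_zero.mp hc]
    have hbase : Tendsto (fun n => X_ n i - X_ n j) atTop (𝓝 (Y i - Y j)) :=
      (hco i).sub (hco j)
    have hcont : ContinuousAt (fun x : ℝ => |x| ^ (1 - m)) (Y i - Y j) := by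
      apply ContinuousAt.rpow_const continuous_abs.continuousAt
      left
      rwa [abs_ne_zero]
    exact hcont.tendsto.comp hbase

lemma gapSum_tendsto {p : ℕ} {X_ : ℕ → EuclideanSpace ℝ (Fin p)}
    {Y : EuclideanSpace ℝ (Fin p)} (hY : StrictMono fun i => Y i)
    (hco : ∀ i : Fin p, Tendsto (fun n => X_ n i) atTop (𝓝 (Y i))) :
    Tendsto (fun n => gapSum m p (X_ n)) atTop (𝓝 (gapSum m p Y)) := by
  rw [gapSum]
  apply tendsto_finset_sum
  intro i _
  by_cases h : (i : ℕ) + 1 < p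
  · simp only [dif_pos h]
    have hlt : Y i < Y ⟨(i:ℕ)+1, h⟩ := hY (by simp [Fin.lt_def])
    have hbase : Tendsto (fun n => X_ n ⟨(i:ℕ)+1, h⟩ - X_ n i) atTop
        (𝓝 (Y ⟨(i:ℕ)+1, h⟩ - Y i)) := (hco _).sub (hco i)
    have hcont : ContinuousAt (fun x : ℝ => x ^ (1 - m)) (Y ⟨(i:ℕ)+1, h⟩ - Y i) :=
      Real.continuousAt_rpow_const _ _ (Or.inl (by linarith))
    exact hcont.tendsto.comp hbase
  · simp only [dif_neg h]
    exact tendsto_const_nhds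

end S18

namespace S18

open Filter Finset Real Topology

variable {m : ℝ}

lemma main_att (hm : 1 < m) : ∀ p, 2 ≤ p →
    (∃ X : EuclideanSpace ℝ (Fin p), memR p X ∧
      pairSum m p X = sig m p * gapSum m p X)
    ∧ ∀ k, k < p → sig m k < sig m p := by
  intro p
  induction p using Nat.strong_induction_on with
  | _ p ih =>
    intro hp
    rcases eq_or_lt_of_le hp with rfl | hp3
    · -- base case p = 2
      refine ⟨att_two hm, ?_⟩
      intro k hk
      rw [sig_two hm, sig_eq_zero_of_le_one hm (by omega)]
      norm_num
    · -- inductive step, p ≥ 3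
      have hq2 : 2 ≤ p - 1 := by omega
      have hqp : p - 1 < p := by omega
      obtain ⟨hattq, hstrictq⟩ := ih (p - 1) hqp hq2
      have hqsucc : p - 1 + 1 = p := by omega
      have hstep : sig m (p - 1) < sig m p := by
        have := sig_lt_succ hm hq2 hattq
        rwa [hqsucc] at this
      have hstrict : ∀ k, k < p → sig m k < sig m p := by
        intro k hk
        rcases Nat.lt_or_ge k (p - 1) with h | h
        · rcases Nat.lt_or_ge k 2 with h2 | h2
          · calc sig m k = 0 := sig_eq_zero_of_le_one hm (by omega)
              _ < 2 := by norm_num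
              _ ≤ sig m p := two_le_sig hm (by omega)
          · exact (hstrictq k h).trans hstep
        · have : k = p - 1 := by omega
          rw [this]; exact hstep
      refine ⟨?_, hstrict⟩
      -- maximizing sequence
      obtain ⟨u, -, hutend, humem⟩ := exists_seq_tendsto_sSup (sigSet_nonempty (m := m) p)
        (sigSet_bddAbove hm p)
      choose Xn hXn hun using humem
      -- normalize
      set z : Fin p := ⟨0, by omega⟩
      set l : Fin p := ⟨p - 1, by omega⟩
      have hzl : z < l := by simp [Fin.lt_def, z, l]; omega
      set d : ℕ → ℝ := fun n => Xn n l - Xn n z with hd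
      have hdpos : ∀ n, 0 < d n := fun n => sub_pos.mpr ((hXn n).1 hzl)
      set W : ℕ → EuclideanSpace ℝ (Fin p) := fun n => (d n)⁻¹ • Xn n with hW
      have hWmem : ∀ n, memR p (W n) := fun n => memR_smul (inv_pos.mpr (hdpos n)) (hXn n)
      have hWratio : ∀ n, pairSum m p (W n) / gapSum m p (W n) = u n := fun n => by
        rw [hW]
        rw [ratio_smul hm (inv_pos.mpr (hdpos n)) (hXn n)]
        exact (hun n).symm
      have hWdiam : ∀ n, W n l - W n z = 1 := by
        intro n
        simp only [hW, smul_coord]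
        rw [← mul_sub]
        exact inv_mul_cancel₀ (ne_of_gt (hdpos n))
      have hWbound : ∀ n, ∀ i : Fin p, |W n i| ≤ 1 := by
        intro n
        apply coord_bounds (by omega) (hWmem n)
        exact hWdiam n
      have hWball : ∀ n, W n ∈ Metric.closedBall (0 : EuclideanSpace ℝ (Fin p)) (Real.sqrt p) := by
        intro n
        rw [Metric.mem_closedBall, dist_zero_right]
        exact norm_le_sqrt (hWbound n)
      obtain ⟨Y, -, φ, hφ, hYtend⟩ := (isCompact_closedBall (0 : EuclideanSpace ℝ (Fin p))
        (Real.sqrt p)).tendsto_subseq hWball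
      have hco : ∀ i : Fin p, Tendsto (fun n => W (φ n) i) atTop (𝓝 (Y i)) := by
        intro i
        have hc : Continuous fun x : EuclideanSpace ℝ (Fin p) => x i :=
          (EuclideanSpace.proj (𝕜 := ℝ) i).continuous
        exact (hc.tendsto Y).comp hYtend
      have huφ : Tendsto (fun n => u (φ n)) atTop (𝓝 (sig m p)) := by
        rw [sig_def]
        exact hutend.comp (hφ.tendsto_atTop)
      -- properties of Y
      have hYmono : ∀ i j : Fin p, i ≤ j → Y i ≤ Y j := by
        intro i j hij
        apply le_of_tendsto_of_tendsto (hco i) (hco j)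
        filter_upwards with n
        exact (hWmem (φ n)).1.monotone hij
      have hYdiam : Y l - Y z = 1 := by
        have h1 : Tendsto (fun n => W (φ n) l - W (φ n) z) atTop (𝓝 (Y l - Y z)) :=
          (hco l).sub (hco z)
        have h2 : Tendsto (fun n => W (φ n) l - W (φ n) z) atTop (𝓝 1) := by
          apply tendsto_const_nhds.congr
          intro n
          exact (hWdiam (φ n)).symm
        exact tendsto_nhds_unique h1 h2
      have hYsum : ∑ i, Y i = 0 := by
        have h1 : Tendsto (fun n => ∑ i, W (φ n) i) atTop (𝓝 (∑ i, Y i)) :=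
          tendsto_finset_sum _ (fun i _ => hco i)
        have h2 : Tendsto (fun n => ∑ i, W (φ n) i) atTop (𝓝 0) := by
          apply tendsto_const_nhds.congr
          intro n
          exact ((hWmem (φ n)).2).symm
        exact tendsto_nhds_unique h1 h2
      by_cases hYstrict : StrictMono fun i : Fin p => Y i
      · -- limit is admissible: the sup is attained
        have hYmem : memR p Y := ⟨hYstrict, hYsum⟩
        have hGpos : 0 < gapSum m p Y := gapSum_pos hm hp hYmem
        have hP : Tendsto (fun n => pairSum m p (W (φ n))) atTop (𝓝 (pairSum m p Y)) :=
          pairSum_tendsto hYstrict hco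
        have hG : Tendsto (fun n => gapSum m p (W (φ n))) atTop (𝓝 (gapSum m p Y)) :=
          gapSum_tendsto hYstrict hco
        have hratio : Tendsto (fun n => pairSum m p (W (φ n)) / gapSum m p (W (φ n)))
            atTop (𝓝 (pairSum m p Y / gapSum m p Y)) := hP.div hG (ne_of_gt hGpos)
        have hratio' : Tendsto (fun n => pairSum m p (W (φ n)) / gapSum m p (W (φ n)))
            atTop (𝓝 (sig m p)) := by
          apply huφ.congr
          intro n
          exact (hWratio (φ n)).symm
        have heq : pairSum m p Y / gapSum m p Y = sig m p :=
          tendsto_nhds_unique hratio hratio'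
        exact ⟨Y, hYmem, by rw [← heq, div_mul_cancel₀ _ (ne_of_gt hGpos)]⟩
      · -- a gap collapses: contradiction with strict monotonicity of sig
        exfalso
        -- find a collapsing adjacent pair
        have hcollapse : ∃ k : ℕ, k + 1 < p ∧
            extC p Y (k + 1) = extC p Y k := by
          by_contra hcon
          push_neg at hcon
          apply hYstrict
          have hadj : ∀ k : ℕ, (hk : k + 1 < p) → Y ⟨k, by omega⟩ < Y ⟨k+1, hk⟩ := by
            intro k hk
            have h1 : Y ⟨k, by omega⟩ ≤ Y ⟨k+1, hk⟩ := hYmono _ _ (by simp [Fin.le_def])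
            rcases eq_or_lt_of_le h1 with heq | h
            · exfalso
              apply hcon k hk
              rw [extC, extC, dif_pos hk, dif_pos (by omega : k < p)]
              exact heq.symm
            · exact h
          intro i j hij
          -- chain adjacent strict inequalities
          have : ∀ s t : ℕ, (hst : s < t) → (ht : t < p) → Y ⟨s, by omega⟩ < Y ⟨t, ht⟩ := by
            intro s t hst ht
            induction t with
            | zero => omega
            | succ r ihr =>
              rcases Nat.lt_or_ge s r with h | h
              · exact (ihr (by omega) (by omega)).trans (hadj r (by omega))
              · have : s = r := by omega
                subst this
                exact hadj s (by omega)
          have hij' : (i : ℕ) < (j : ℕ) := hij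
          have := this i j hij' j.isLt
          simpa using this
        obtain ⟨k, hk, hkeq⟩ := hcollapse
        -- apply the collapse machinery
        set Z : ℕ → ℕ → ℝ := fun n => extC p (W (φ n)) with hZ
        have hincZ : ∀ n, IncOn (Z n) 0 p := fun n => memR_incOn (hWmem (φ n))
        have hcoZ : ∀ i, i < p → Tendsto (fun n => Z n i) atTop (𝓝 (extC p Y i)) := by
          intro i hi
          have : ∀ n, Z n i = W (φ n) ⟨i, hi⟩ := by
            intro n
            simp [hZ, extC, hi]
          rw [show extC p Y i = Y ⟨i, hi⟩ from by simp [extC, hi]]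
          exact (hco ⟨i, hi⟩).congr (fun n => (this n).symm)
        have hneY : extC p Y 0 < extC p Y (p - 1) := by
          rw [show extC p Y 0 = Y z from by simp [extC, z, show 0 < p by omega],
            show extC p Y (p - 1) = Y l from by simp [extC, l, show p - 1 < p by omega]]
          linarith [hYdiam]
        obtain ⟨C, hC⟩ := collapse_bound hm hp hincZ hcoZ hneY
        have hgapto : Tendsto (fun n => Z n (k + 1) - Z n k) atTop (𝓝 0) := by
          have h1 : Tendsto (fun n => Z n (k + 1) - Z n k) atTop
              (𝓝 (extC p Y (k + 1) - extC p Y k)) :=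
            ((hcoZ (k+1) hk).sub (hcoZ k (by omega)))
          rwa [hkeq, sub_self] at h1
        have hGatT : Tendsto (fun n => Gw m (Z n) 0 p) atTop atTop :=
          Gw_tendsto_atTop hm hincZ hk hgapto
        -- eventually u (φ n) ≤ sig (p-1) + C / Gw
        have hGpos : ∀ n, 0 < Gw m (Z n) 0 p := fun n => Gw_pos hm (hincZ n) hp
        have hub : ∀ᶠ n in atTop, u (φ n) ≤ sig m (p - 1) + C / Gw m (Z n) 0 p := by
          filter_upwards [hC] with n hn
          have hu' : u (φ n) = Pw m (Z n) 0 p / Gw m (Z n) 0 p := by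
            rw [← hWratio (φ n), hZ]
            rw [pairSum_eq_Pw, gapSum_eq_Gw]
          rw [hu', div_le_iff₀ (hGpos n)]
          calc Pw m (Z n) 0 p ≤ sig m (p-1) * Gw m (Z n) 0 p + C := hn
            _ ≤ (sig m (p - 1) + C / Gw m (Z n) 0 p) * Gw m (Z n) 0 p := by
                rw [add_mul, div_mul_cancel₀ _ (ne_of_gt (hGpos n))]
        have hrhs : Tendsto (fun n => sig m (p - 1) + C / Gw m (Z n) 0 p) atTop
            (𝓝 (sig m (p - 1))) := by
          have : Tendsto (fun n => C / Gw m (Z n) 0 p) atTop (𝓝 0) :=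
            Tendsto.div_atTop tendsto_const_nhds hGatT
          simpa using tendsto_const_nhds.add this
        have : sig m p ≤ sig m (p - 1) := le_of_tendsto_of_tendsto huφ hrhs hub
        linarith [hstep]

end S18

namespace S18

open Filter Finset Real Topology

variable {m : ℝ}

lemma static_gap_bound (hm : 1 < m) {N : ℕ} (hN : 2 ≤ N) {χ : ℝ} (hχ : 0 < χ)
    (hstrict : χ * sig m (N - 1) < 1) (ρ R B : ℝ) (hρ : 0 < ρ) :
    ∃ ε : ℝ, 0 < ε ∧ ∀ X : EuclideanSpace ℝ (Fin N), memR N X → ρ ≤ ‖X‖ → ‖X‖ ≤ R →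
      gapSum m N X - χ * pairSum m N X ≤ B →
      ∀ i : ℕ, i + 1 < N → ε ≤ gapAt N X i := by
  by_contra hcon
  push_neg at hcon
  have hchoice : ∀ n : ℕ, ∃ X : EuclideanSpace ℝ (Fin N), (memR N X ∧ ρ ≤ ‖X‖ ∧ ‖X‖ ≤ R ∧
      gapSum m N X - χ * pairSum m N X ≤ B) ∧ ∃ i : ℕ, i + 1 < N ∧
      gapAt N X i < 1 / (n + 1) := by
    intro n
    obtain ⟨X, hX1, hX2, hX3, hX4, i, hi, hgap⟩ := hcon (1 / (n + 1)) (by positivity)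
    exact ⟨X, ⟨hX1, hX2, hX3, hX4⟩, i, hi, hgap⟩
  choose X_ hX_ i_ hi_ hgap_ using hchoice
  -- pigeonhole on the collapsing index
  have hfreq : ∃ i₀ : ℕ, i₀ + 1 < N ∧ ∃ᶠ n in atTop, i_ n = i₀ := by
    set f : ℕ → Fin (N - 1) := fun n => ⟨i_ n, by have := hi_ n; omega⟩ with hf
    obtain ⟨i₀, hi₀⟩ := Finite.exists_infinite_fiber f
    refine ⟨(i₀ : ℕ), by have := i₀.isLt; omega, ?_⟩
    rw [Nat.frequently_atTop_iff_infinite]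
    rw [Set.infinite_coe_iff] at hi₀
    apply hi₀.mono
    intro n hn
    have : f n = i₀ := hn
    have := congrArg Fin.val this
    simpa [hf] using this
  obtain ⟨i₀, hi₀N, hfreq⟩ := hfreq
  obtain ⟨φ, hφ, hφi⟩ := Filter.extraction_of_frequently_atTop hfreq
  -- compactness
  have hball : ∀ n, X_ (φ n) ∈ Metric.closedBall (0 : EuclideanSpace ℝ (Fin N)) R := by
    intro n
    rw [Metric.mem_closedBall, dist_zero_right]
    exact (hX_ (φ n)).2.2.1
  obtain ⟨Y, -, ψ, hψ, hYtend⟩ := (isCompact_closedBall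
    (0 : EuclideanSpace ℝ (Fin N)) R).tendsto_subseq hball
  set σ : ℕ → ℕ := φ ∘ ψ with hσ
  have hσmono : StrictMono σ := hφ.comp hψ
  have hco : ∀ i : Fin N, Tendsto (fun n => X_ (σ n) i) atTop (𝓝 (Y i)) := by
    intro i
    have hc : Continuous fun x : EuclideanSpace ℝ (Fin N) => x i :=
      (EuclideanSpace.proj (𝕜 := ℝ) i).continuous
    exact (hc.tendsto Y).comp hYtend
  have hmem : ∀ n, memR N (X_ (σ n)) := fun n => (hX_ (σ n)).1
  -- Y is not totally collapsed
  set z : Fin N := ⟨0, by omega⟩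
  set l : Fin N := ⟨N - 1, by omega⟩
  have hYmono : ∀ i j : Fin N, i ≤ j → Y i ≤ Y j := by
    intro i j hij
    apply le_of_tendsto_of_tendsto (hco i) (hco j)
    filter_upwards with n
    exact (hmem n).1.monotone hij
  have hYsum : ∑ i, Y i = 0 := by
    have h1 : Tendsto (fun n => ∑ i, X_ (σ n) i) atTop (𝓝 (∑ i, Y i)) :=
      tendsto_finset_sum _ (fun i _ => hco i)
    have h2 : Tendsto (fun n => ∑ i, X_ (σ n) i) atTop (𝓝 0) :=
      tendsto_const_nhds.congr (fun n => ((hmem n).2).symm)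
    exact tendsto_nhds_unique h1 h2
  have hYnorm : ρ ≤ ‖Y‖ := by
    have h1 : Tendsto (fun n => ‖X_ (σ n)‖) atTop (𝓝 ‖Y‖) :=
      (continuous_norm.tendsto Y).comp hYtend
    apply ge_of_tendsto h1
    filter_upwards with n
    exact (hX_ (σ n)).2.1
  have hYne : Y z < Y l := by
    rcases eq_or_lt_of_le (hYmono z l (by simp [Fin.le_def, z, l])) with heq | h
    · exfalso
      have hall : ∀ i : Fin N, Y i = Y z := by
        intro i
        have h1 : Y z ≤ Y i := hYmono z i (by simp [Fin.le_def, z])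
        have h2 : Y i ≤ Y l := hYmono i l (by simp [Fin.le_def, l]; omega)
        linarith [heq]
      have hzero : Y z = 0 := by
        have : ∑ i, Y i = ((Finset.univ : Finset (Fin N)).card) • Y z := by
          rw [Finset.sum_congr rfl (fun i _ => hall i), Finset.sum_const]
        rw [hYsum] at this
        have hcard : (Finset.univ : Finset (Fin N)).card = N := by simp
        rw [hcard, nsmul_eq_mul] at this
        have hN0 : (0:ℝ) < N := by positivity
        nlinarith [this]
      have hY0 : Y = 0 := by
        ext i
        rw [hall i, hzero]
        rfl
      rw [hY0, norm_zero] at hYnorm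
      linarith
    · exact h
  -- the collapsing gap tends to zero
  have hgapval : ∀ n, gapAt N (X_ (σ n)) i₀
      = extC N (X_ (σ n)) (i₀ + 1) - extC N (X_ (σ n)) i₀ := by
    intro n
    rw [gapAt, dif_pos hi₀N]
    simp [extC, hi₀N, Nat.lt_of_succ_lt hi₀N]
  have hgappos : ∀ n, 0 < gapAt N (X_ (σ n)) i₀ := by
    intro n
    rw [hgapval n]
    have := memR_incOn (hmem n) (Nat.lt_succ_self i₀) hi₀N
    simpa using this
  have hgaplt : ∀ n, gapAt N (X_ (σ n)) i₀ < 1 / (n + 1 : ℝ) := by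
    intro n
    have h1 : gapAt N (X_ (σ n)) (i_ (σ n)) < 1 / (σ n + 1 : ℝ) := hgap_ (σ n)
    have h2 : i_ (σ n) = i₀ := hφi (ψ n)
    rw [h2] at h1
    apply h1.trans_le
    apply div_le_div_of_nonneg_left (by norm_num) (by positivity)
    have : n ≤ σ n := hσmono.le_apply
    push_cast
    linarith [Nat.cast_le (α := ℝ).mpr this]
  have hgap0 : Tendsto (fun n => gapAt N (X_ (σ n)) i₀) atTop (𝓝 0) :=
    tendsto_of_tendsto_of_tendsto_of_le_of_le tendsto_const_nhds
      tendsto_one_div_add_atTop_nhds_zero_nat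
      (fun n => (hgappos n).le) (fun n => (hgaplt n).le)
  -- set up the collapse machinery
  set Z : ℕ → ℕ → ℝ := fun n => extC N (X_ (σ n)) with hZ
  have hincZ : ∀ n, IncOn (Z n) 0 N := fun n => memR_incOn (hmem n)
  have hcoZ : ∀ i, i < N → Tendsto (fun n => Z n i) atTop (𝓝 (extC N Y i)) := by
    intro i hi
    have he : ∀ n, Z n i = X_ (σ n) ⟨i, hi⟩ := fun n => by simp [hZ, extC, hi]
    rw [show extC N Y i = Y ⟨i, hi⟩ from by simp [extC, hi]]
    exact (hco ⟨i, hi⟩).congr (fun n => (he n).symm)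
  have hneY : extC N Y 0 < extC N Y (N - 1) := by
    rw [show extC N Y 0 = Y z from by simp [extC, z, show 0 < N by omega],
      show extC N Y (N - 1) = Y l from by simp [extC, l, show N - 1 < N by omega]]
    exact hYne
  obtain ⟨C, hC⟩ := collapse_bound hm hN hincZ hcoZ hneY
  have hgapto : Tendsto (fun n => Z n (i₀ + 1) - Z n i₀) atTop (𝓝 0) := by
    apply hgap0.congr
    intro n
    exact hgapval n
  have hGatT : Tendsto (fun n => Gw m (Z n) 0 N) atTop atTop :=
    Gw_tendsto_atTop hm hincZ hi₀N hgapto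
  have henergy : ∀ n, Gw m (Z n) 0 N - χ * Pw m (Z n) 0 N ≤ B := by
    intro n
    have := (hX_ (σ n)).2.2.2
    rwa [gapSum_eq_Gw, pairSum_eq_Pw] at this
  set c : ℝ := χ * sig m (N - 1) with hc
  set M : ℝ := (B + χ * C + 1) / (1 - c) with hM
  have hev := (hGatT.eventually_ge_atTop M).and hC
  obtain ⟨n, hn1, hn2⟩ := hev.exists
  have hPw0 : 0 ≤ Pw m (Z n) 0 N := Pw_nonneg _ _ _
  have h1c : 0 < 1 - c := by rw [hc]; linarith
  have hME : (1 - c) * M = B + χ * C + 1 := by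
    rw [hM]
    field_simp
  have h2 : χ * Pw m (Z n) 0 N ≤ c * Gw m (Z n) 0 N + χ * C := by
    have h5 := mul_le_mul_of_nonneg_left hn2 hχ.le
    rw [hc]
    nlinarith [h5]
  have h3 : (1 - c) * Gw m (Z n) 0 N ≤ B + χ * C := by nlinarith [henergy n, h2]
  have h4 : (1 - c) * M ≤ (1 - c) * Gw m (Z n) 0 N := mul_le_mul_of_nonneg_left hn1 h1c.le
  linarith [hME, h3, h4]

end S18

namespace S18

open Filter Finset Real Topology RealInnerProductSpace

variable {m χ : ℝ}

lemma coord_differentiable {N : ℕ} (i : Fin N) (X : EuclideanSpace ℝ (Fin N)) :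
    DifferentiableAt ℝ (fun Y : EuclideanSpace ℝ (Fin N) => Y i) X :=
  (EuclideanSpace.proj (𝕜 := ℝ) i).differentiableAt

lemma FF_differentiableAt (hm : 1 < m) {N : ℕ} {X : EuclideanSpace ℝ (Fin N)}
    (hX : StrictMono fun i => X i) : DifferentiableAt ℝ (FF m χ N) X := by
  have hgap : DifferentiableAt ℝ (gapSum m N) X := by
    rw [show gapSum m N = fun Y => ∑ i : Fin N,
      (if h : (i : ℕ) + 1 < N then (Y ⟨(i : ℕ) + 1, h⟩ - Y i) ^ (1 - m) else 0) from rfl]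
    apply DifferentiableAt.fun_sum
    intro i _
    by_cases h : (i : ℕ) + 1 < N
    · simp only [dif_pos h]
      have hlt : X i < X ⟨(i:ℕ)+1, h⟩ := hX (by simp [Fin.lt_def])
      exact ((coord_differentiable _ X).sub (coord_differentiable i X)).rpow_const
        (Or.inl (by intro hc; simp only [Pi.sub_apply, sub_eq_zero] at hc; exact absurd hc (ne_of_gt hlt)))
    · simp only [dif_neg h]
      exact differentiableAt_const 0
  have hpair : DifferentiableAt ℝ (pairSum m N) X := by
    rw [show pairSum m N = fun Y => ∑ i : Fin N, ∑ j : Fin N,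
      (if i ≠ j then |Y i - Y j| ^ (1 - m) else 0) from rfl]
    apply DifferentiableAt.fun_sum
    intro i _
    apply DifferentiableAt.fun_sum
    intro j _
    by_cases h : i = j
    · simp only [h, ne_eq, not_true_eq_false, if_false]
      exact differentiableAt_const 0
    · simp only [ne_eq, h, not_false_eq_true, if_true]
      rcases lt_or_gt_of_ne h with hij | hij
      · -- X i < X j
        have hlt : X i < X j := hX hij
        have hdiff : DifferentiableAt ℝ (fun Y : EuclideanSpace ℝ (Fin N) => (Y j - Y i) ^ (1 - m)) X :=
          ((coord_differentiable j X).sub (coord_differentiable i X)).rpow_const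
            (Or.inl (by intro hc; simp only [Pi.sub_apply, sub_eq_zero] at hc; exact absurd hc (ne_of_gt hlt)))
        apply hdiff.congr_of_eventuallyEq
        have hopen : IsOpen {Y : EuclideanSpace ℝ (Fin N) | Y i < Y j} :=
          isOpen_lt (EuclideanSpace.proj (𝕜 := ℝ) i).continuous (EuclideanSpace.proj (𝕜 := ℝ) j).continuous
        filter_upwards [hopen.mem_nhds hlt] with Y hY
        rw [abs_of_neg (sub_neg.mpr hY), neg_sub]
      · have hlt : X j < X i := hX hij
        have hdiff : DifferentiableAt ℝ (fun Y : EuclideanSpace ℝ (Fin N) => (Y i - Y j) ^ (1 - m)) X :=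
          ((coord_differentiable i X).sub (coord_differentiable j X)).rpow_const
            (Or.inl (by intro hc; simp only [Pi.sub_apply, sub_eq_zero] at hc; exact absurd hc (ne_of_gt hlt)))
        apply hdiff.congr_of_eventuallyEq
        have hopen : IsOpen {Y : EuclideanSpace ℝ (Fin N) | Y j < Y i} :=
          isOpen_lt (EuclideanSpace.proj (𝕜 := ℝ) j).continuous (EuclideanSpace.proj (𝕜 := ℝ) i).continuous
        filter_upwards [hopen.mem_nhds hlt] with Y hY
        rw [abs_of_pos (sub_pos.mpr hY)]
  rw [show FF m χ N = fun Y => (m - 1)⁻¹ * gapSum m N Y - χ / (m - 1) * pairSum m N Y from rfl]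
  exact (hgap.const_mul _).sub (hpair.const_mul _)

lemma FF_smul (hm : 1 < m) {N : ℕ} {X : EuclideanSpace ℝ (Fin N)} (hX : memR N X)
    {c : ℝ} (hc : 0 < c) : FF m χ N (c • X) = c ^ (1 - m) * FF m χ N X := by
  rw [FF, FF, gapSum_smul hc hX, pairSum_smul hc]
  ring

lemma euler (hm : 1 < m) {N : ℕ} {X : EuclideanSpace ℝ (Fin N)} (hX : memR N X) :
    ⟪gradient (FF m χ N) X, X⟫ = (1 - m) * FF m χ N X := by
  have hdiff := FF_differentiableAt hm (χ := χ) hX.1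
  have hfd : HasFDerivAt (FF m χ N)
      ((InnerProductSpace.toDual ℝ (EuclideanSpace ℝ (Fin N))) (gradient (FF m χ N) X)) X :=
    hdiff.hasGradientAt.hasFDerivAt
  have hc : HasDerivAt (fun l : ℝ => l • X) X 1 := by
    simpa using (hasDerivAt_id (1:ℝ)).smul_const X
  have hcomp : HasDerivAt (fun l : ℝ => FF m χ N (l • X))
      (((InnerProductSpace.toDual ℝ (EuclideanSpace ℝ (Fin N))) (gradient (FF m χ N) X)) X) 1 := by
    have h1 : HasFDerivAt (FF m χ N)
        ((InnerProductSpace.toDual ℝ (EuclideanSpace ℝ (Fin N))) (gradient (FF m χ N) X))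
        ((fun l : ℝ => l • X) 1) := by
      simpa using hfd
    exact h1.comp_hasDerivAt 1 hc
  have hg : HasDerivAt (fun l : ℝ => l ^ (1 - m) * FF m χ N X) ((1 - m) * FF m χ N X) 1 := by
    have := (Real.hasDerivAt_rpow_const (x := (1:ℝ)) (p := 1 - m) (Or.inl one_ne_zero)).mul_const
      (FF m χ N X)
    simpa using this
  have hev : (fun l : ℝ => l ^ (1 - m) * FF m χ N X) =ᶠ[𝓝 1] (fun l : ℝ => FF m χ N (l • X)) := by
    filter_upwards [eventually_gt_nhds (by norm_num : (0:ℝ) < 1)] with l hl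
    rw [FF_smul hm hX hl]
  have hcomp' : HasDerivAt (fun l : ℝ => l ^ (1 - m) * FF m χ N X)
      (((InnerProductSpace.toDual ℝ (EuclideanSpace ℝ (Fin N))) (gradient (FF m χ N) X)) X) 1 :=
    hcomp.congr_of_eventuallyEq hev
  have := hcomp'.unique hg
  rwa [InnerProductSpace.toDual_apply_apply] at this

lemma FF_nonneg (hm : 1 < m) {N : ℕ} (hχpos : 0 < χ) (hχs : χ * sig m N ≤ 1)
    {X : EuclideanSpace ℝ (Fin N)} (hX : memR N X) : 0 ≤ FF m χ N X := by
  have h1 : pairSum m N X ≤ sig m N * gapSum m N X := pairSum_le_sig hm hX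
  have hg : 0 ≤ gapSum m N X := gapSum_nonneg hm hX
  have hs : 0 ≤ sig m N := sig_nonneg hm N
  have h2 : χ * pairSum m N X ≤ gapSum m N X := by
    calc χ * pairSum m N X ≤ χ * (sig m N * gapSum m N X) :=
          mul_le_mul_of_nonneg_left h1 hχpos.le
      _ = (χ * sig m N) * gapSum m N X := by ring
      _ ≤ 1 * gapSum m N X := mul_le_mul_of_nonneg_right hχs hg
      _ = gapSum m N X := one_mul _
  rw [FF]
  have hminv : 0 < (m - 1)⁻¹ := inv_pos.mpr (by linarith)
  have : χ / (m - 1) = (m - 1)⁻¹ * χ := by rw [div_eq_mul_inv]; ring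
  rw [this]
  nlinarith [h2]

lemma mono_aux {s : Set ℝ} (hs : Convex ℝ s) {f f' : ℝ → ℝ}
    (hf : ∀ t ∈ s, HasDerivWithinAt f (f' t) s t) (h0 : ∀ t ∈ s, 0 ≤ f' t) :
    MonotoneOn f s := by
  apply monotoneOn_of_deriv_nonneg hs
  · intro t ht
    exact (hf t ht).continuousWithinAt
  · intro t ht
    have hts : t ∈ s := interior_subset ht
    exact (((hf t hts).hasDerivAt (mem_interior_iff_mem_nhds.mp ht)).differentiableAt).differentiableWithinAt
  · intro t ht
    have hts : t ∈ s := interior_subset ht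
    rw [((hf t hts).hasDerivAt (mem_interior_iff_mem_nhds.mp ht)).deriv]
    exact h0 t hts

lemma anti_aux {s : Set ℝ} (hs : Convex ℝ s) {f f' : ℝ → ℝ}
    (hf : ∀ t ∈ s, HasDerivWithinAt f (f' t) s t) (h0 : ∀ t ∈ s, f' t ≤ 0) :
    AntitoneOn f s := by
  apply antitoneOn_of_deriv_nonpos hs
  · intro t ht
    exact (hf t ht).continuousWithinAt
  · intro t ht
    have hts : t ∈ s := interior_subset ht
    exact (((hf t hts).hasDerivAt (mem_interior_iff_mem_nhds.mp ht)).differentiableAt).differentiableWithinAt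
  · intro t ht
    have hts : t ∈ s := interior_subset ht
    rw [((hf t hts).hasDerivAt (mem_interior_iff_mem_nhds.mp ht)).deriv]
    exact h0 t hts

end S18

theorem stmt18 (N : ℕ) (hN : 2 ≤ N) (m χ : ℝ) (hm : 1 < m) (hχ : 0 < χ)
    (hcrit : χ = Cp m N) (T : ℝ) (hT : 0 < T) (X : ℝ → EuclideanSpace ℝ (Fin N))
    (hflow : isGFlow m χ N T X) :
    ∃ ε : ℝ, 0 < ε ∧ ∀ t ∈ Set.Ico (0 : ℝ) T, ∀ i : ℕ, i + 1 < N →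
      ε ≤ gapAt N (X t) i := by
  classical
  have hm1 : (0:ℝ) < m - 1 := by linarith
  set s : Set ℝ := Set.Ico (0:ℝ) T with hs
  have h0s : (0:ℝ) ∈ s := ⟨le_refl 0, hT⟩
  have hmem : ∀ t ∈ s, memR N (X t) := fun t ht => (hflow t ht).1
  have hderiv : ∀ t ∈ s, HasDerivWithinAt X (-(gradient (FF m χ N) (X t))) s t :=
    fun t ht => (hflow t ht).2
  -- critical mass relations
  have hsig2 : 2 ≤ S18.sig m N := S18.two_le_sig hm hN
  have hχeq : χ = (S18.sig m N)⁻¹ := hcrit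
  have hχsig : χ * S18.sig m N = 1 := by
    rw [hχeq]; exact inv_mul_cancel₀ (by linarith)
  have hstrictsig : S18.sig m (N-1) < S18.sig m N := (S18.main_att hm N hN).2 (N-1) (by omega)
  have hχstrict : χ * S18.sig m (N-1) < 1 := by
    calc χ * S18.sig m (N-1) < χ * S18.sig m N := by
          exact mul_lt_mul_of_pos_left hstrictsig hχ
      _ = 1 := hχsig
  -- energy decay
  set E : ℝ → ℝ := fun t => FF m χ N (X t) with hE
  have hEderiv : ∀ t ∈ s, HasDerivWithinAt E (-(‖gradient (FF m χ N) (X t)‖^2)) s t := by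
    intro t ht
    have hdiff := S18.FF_differentiableAt hm (χ := χ) (hmem t ht).1
    have hfd := hdiff.hasGradientAt.hasFDerivAt
    have hcomp := hfd.comp_hasDerivWithinAt t (hderiv t ht)
    have hval : (InnerProductSpace.toDual ℝ (EuclideanSpace ℝ (Fin N)))
        (gradient (FF m χ N) (X t)) (-(gradient (FF m χ N) (X t)))
        = -(‖gradient (FF m χ N) (X t)‖^2) := by
      rw [InnerProductSpace.toDual_apply_apply, inner_neg_right, real_inner_self_eq_norm_sq]
    rw [hval] at hcomp
    exact hcomp
  have hEanti : AntitoneOn E s := S18.anti_aux (convex_Ico 0 T) hEderiv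
    (fun t ht => neg_nonpos.mpr (sq_nonneg _))
  have hE0 : ∀ t ∈ s, E t ≤ E 0 := fun t ht => hEanti h0s ht ht.1
  have hEpos : ∀ t ∈ s, 0 ≤ E t := fun t ht =>
    S18.FF_nonneg hm hχ (le_of_eq hχsig) (hmem t ht)
  have hE00 : 0 ≤ E 0 := hEpos 0 h0s
  -- second moment evolution
  set n2 : ℝ → ℝ := fun t => (inner ℝ (X t) (X t) : ℝ) with hn2
  have hn2deriv : ∀ t ∈ s, HasDerivWithinAt n2 (2*(m-1)*E t) s t := by
    intro t ht
    have h := HasDerivWithinAt.inner ℝ (hderiv t ht) (hderiv t ht)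
    have hv : (inner ℝ (X t) (-(gradient (FF m χ N) (X t))) : ℝ)
        + (inner ℝ (-(gradient (FF m χ N) (X t))) (X t) : ℝ) = 2*(m-1)*E t := by
      rw [inner_neg_right, inner_neg_left, real_inner_comm]
      rw [S18.euler hm (hmem t ht)]
      show -((1 - m) * FF m χ N (X t)) + -((1-m) * FF m χ N (X t)) = 2 * (m-1) * E t
      rw [hE]
      ring
    rw [hv] at h
    exact h
  have hn2mono : MonotoneOn n2 s := S18.mono_aux (convex_Ico 0 T) hn2deriv
    (fun t ht => by nlinarith [hEpos t ht])
  have hlow : ∀ t ∈ s, n2 0 ≤ n2 t := fun t ht => hn2mono h0s ht ht.1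
  set c : ℝ := 2*(m-1)*E 0 with hc
  have hc0 : 0 ≤ c := by nlinarith [hE00]
  set q : ℝ → ℝ := fun t => n2 0 + c * t - n2 t with hq
  have hqderiv : ∀ t ∈ s, HasDerivWithinAt q (c - 2*(m-1)*E t) s t := by
    intro t ht
    have h1 : HasDerivWithinAt (fun τ : ℝ => n2 0 + c * τ) c s t := by
      simpa using ((hasDerivWithinAt_id t s).const_mul c).const_add (n2 0)
    exact h1.sub (hn2deriv t ht)
  have hqmono : MonotoneOn q s := S18.mono_aux (convex_Ico 0 T) hqderiv
    (fun t ht => by nlinarith [hE0 t ht])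
  have hup : ∀ t ∈ s, n2 t ≤ n2 0 + c * T := by
    intro t ht
    have h1 : q 0 ≤ q t := hqmono h0s ht ht.1
    have hq0 : q 0 = 0 := by
      show n2 0 + c * 0 - n2 0 = 0
      ring
    have h2 : n2 t ≤ n2 0 + c * t := by
      have h2' : q t = n2 0 + c * t - n2 t := rfl
      linarith [h1, hq0, h2']
    have h3 : c * t ≤ c * T := mul_le_mul_of_nonneg_left ht.2.le hc0
    linarith
  -- norm bounds
  have hnorm : ∀ t, n2 t = ‖X t‖^2 := fun t => real_inner_self_eq_norm_sq _
  have hρ : 0 < ‖X 0‖ := by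
    by_contra h
    push_neg at h
    have h0 : ‖X 0‖ = 0 := le_antisymm h (norm_nonneg _)
    have hX0 : X 0 = 0 := norm_eq_zero.mp h0
    have hsm := (hmem 0 h0s).1
    have hzl : (⟨0, by omega⟩ : Fin N) < ⟨1, by omega⟩ := by simp [Fin.lt_def]
    have := hsm hzl
    rw [hX0] at this
    exact lt_irrefl _ this
  set R : ℝ := Real.sqrt (n2 0 + c * T) with hR
  have hXtle : ∀ t ∈ s, ‖X t‖ ≤ R := by
    intro t ht
    have h1 : ‖X t‖^2 ≤ n2 0 + c*T := by rw [← hnorm]; exact hup t ht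
    calc ‖X t‖ = Real.sqrt (‖X t‖^2) := (Real.sqrt_sq (norm_nonneg _)).symm
      _ ≤ R := Real.sqrt_le_sqrt h1
  have hXtge : ∀ t ∈ s, ‖X 0‖ ≤ ‖X t‖ := by
    intro t ht
    have h1 : ‖X 0‖^2 ≤ ‖X t‖^2 := by rw [← hnorm, ← hnorm]; exact hlow t ht
    calc ‖X 0‖ = Real.sqrt (‖X 0‖^2) := (Real.sqrt_sq (norm_nonneg _)).symm
      _ ≤ Real.sqrt (‖X t‖^2) := Real.sqrt_le_sqrt h1
      _ = ‖X t‖ := Real.sqrt_sq (norm_nonneg _)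
  -- energy bound in gap/pair form
  set B : ℝ := (m-1) * E 0 with hB
  have hEB : ∀ t ∈ s, gapSum m N (X t) - χ * pairSum m N (X t) ≤ B := by
    intro t ht
    have hne : m - 1 ≠ 0 := ne_of_gt hm1
    have h1 : (m-1) * E t = gapSum m N (X t) - χ * pairSum m N (X t) := by
      show (m-1) * FF m χ N (X t) = _
      rw [FF]
      field_simp
    have h2 := hE0 t ht
    rw [hB, ← h1]
    nlinarith [h2]
  obtain ⟨ε, hε, hstatic⟩ := S18.static_gap_bound hm hN hχ hχstrict (‖X 0‖) R B hρ
  refine ⟨ε, hε, ?_⟩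
  intro t ht i hi
  exact hstatic (X t) (hmem t ht) (hXtge t ht) (hXtle t ht) (hEB t ht) i hi
end
end
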